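/- arXiv:1811.01130 — 3 statements merged into one kernel-verified Lean document; each statement's English description precedes it below -/
import Mathlib

section
/- Suppose u, τ ∈ ℂ satisfy Re(τ) > 0, Im(τ) > 0 and (Re(τ) − Im(τ))/2 < Re(u) < 1 + (Re(τ) − Im(τ))/2. Then Υ(u; τ) = e^{πi(u − 1/2 − τ/4)} · ∫_{−∞}^{∞} e^{πiτy² + πy(τ − 2u + 1)}/(e^{πy} + e^{−πy}) dy. -/
open Complex Real MeasureTheory

noncomputable section

def chi (s : ℂ) : ℂ := (π : ℂ) ^ (s - 1/2) * Complex.Gamma ((1 - s)/2) / Complex.Gamma (s/2)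

def RSOmega : Set ℂ := {s : ℂ | s.im ≠ 0 ∨ (0 < s.re ∧ s.re < 1)}

def IsRSTheta (ϑ : ℂ → ℂ) : Prop :=
  DifferentiableOn ℂ ϑ RSOmega ∧ (∀ s ∈ RSOmega, Complex.exp (-2 * I * ϑ s) = chi s) ∧
    ϑ (1/2) = 0

def zetaSum (x : ℝ) (s : ℂ) : ℂ := ∑ n ∈ Finset.Icc 1 ⌊x⌋₊, (n : ℂ) ^ (-s)

def Upsilon (u τ : ℂ) : ℂ :=
  ∫ v : ℝ, Complex.exp (3 * (π:ℂ) * I / 4) *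
    (Complex.exp (-(π:ℂ) * I * τ * (1/2 + Complex.exp (3 * (π:ℂ) * I / 4) * v) ^ 2
        + 2 * (π:ℂ) * I * u * (1/2 + Complex.exp (3 * (π:ℂ) * I / 4) * v)) /
      (Complex.exp (2 * (π:ℂ) * I * (1/2 + Complex.exp (3 * (π:ℂ) * I / 4) * v)) - 1))

def G (u τ : ℂ) : ℂ :=
  τ ^ ((1:ℂ)/4) * Complex.exp (-(π:ℂ) * I * u ^ 2 / 2 + (π:ℂ) * I / 8) *
    Upsilon (τ ^ ((1:ℂ)/2) * u) τ

def Gderiv (k : ℕ) (u τ : ℂ) : ℂ := iteratedDeriv k (fun w => G w τ) u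

def hermiteH (n : ℕ) (x : ℂ) : ℂ :=
  (Nat.factorial n : ℂ) * ∑ j ∈ Finset.range (n / 2 + 1),
    (-1:ℂ) ^ j / ((Nat.factorial j : ℂ) * (Nat.factorial (n - 2*j) : ℂ)) * (2 * x) ^ (n - 2*j)

def obell (p : ℕ → ℂ) (i j : ℕ) : ℂ :=
  ∑ f ∈ (Finset.Nat.antidiagonalTuple j i).filter (fun f => ∀ l, 1 ≤ f l), ∏ l, p (f l)

def bernoulliPoly (n : ℕ) (x : ℂ) : ℂ := Polynomial.aeval x (Polynomial.bernoulli n)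

def fseq (σ : ℝ) (n : ℕ) : ℂ :=
  (bernoulliPoly (n+1) ((σ:ℂ)/2) + (-1:ℂ)^(n+1) * bernoulliPoly (n+1) ((1-(σ:ℂ))/2)) /
    (2*(n:ℂ)*((n:ℂ)+1))

def um (m : ℕ) (σ : ℝ) : ℂ :=
  (-2:ℂ)^m * ∑ k ∈ Finset.range (m+1), obell (fseq σ) m k / (Nat.factorial k : ℂ)

def seqA (j : ℕ) : ℂ := (-1:ℂ)^(j+1) / ((j:ℂ) + 2)

def seqB (j : ℕ) : ℂ := (-1:ℂ)^(j+1) / (j:ℂ)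

def dd (m r : ℕ) (σ : ℝ) : ℂ :=
  ∑ n ∈ Finset.Icc r m, (obell seqA n r / (Nat.factorial r : ℂ)) *
    ∑ k ∈ Finset.range (m - n + 1),
      (obell seqB (m - n) k / (Nat.factorial k : ℂ)) * ((σ:ℂ) - 1)^k

def qq (n ℓ : ℕ) (σ : ℝ) : ℂ :=
  ∑ m ∈ Finset.Icc (ℓ - n) (ℓ / 3), um m σ * dd (n - 2*m) (n + m - ℓ) σ

def PP (n k : ℕ) (x : ℂ) (σ : ℝ) : ℂ :=
  Complex.exp (3 * (π:ℂ) * I * (k:ℂ) / 4) * ∑ ℓ ∈ Finset.range (k/2 + 1),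
    (Nat.choose (3*n - 2*ℓ) (3*n - k) : ℂ) * (-1:ℂ)^(n + ℓ) * 2^(2*ℓ) / 2^k *
      qq n ℓ σ * hermiteH (k - 2*ℓ) (Complex.exp (-(π:ℂ) * I / 4) * x)

def IsAk (s : ℂ) (a : ℕ → ℂ) : Prop :=
  a 0 = 1 ∧ ∀ k : ℕ, ((k:ℂ) + 1) * (Real.sqrt s.im : ℂ) * a (k+1) =
    -((k:ℂ) + 1 - (s.re:ℂ)) * a k + I * (if 2 ≤ k then a (k-2) else 0)

def IsPsi (Ψ : ℂ → ℂ) : Prop :=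
  Differentiable ℂ Ψ ∧ ∀ u : ℂ, Complex.cos ((π:ℂ)*u) ≠ 0 →
    Ψ u = Complex.cos ((π:ℂ)*(u^2/2 - u - 1/8)) / Complex.cos ((π:ℂ)*u)

def wfun (s z : ℂ) : ℂ :=
  Complex.exp ((s - 1) * Complex.log (1 + z / (Real.sqrt s.im : ℂ))
    - I * (Real.sqrt s.im : ℂ) * z + I * z^2 / 2)

def rn (n : ℕ) (s z : ℂ) : ℂ :=
  wfun s z - ∑ k ∈ Finset.range n, (iteratedDeriv k (wfun s) 0 / (Nat.factorial k : ℂ)) * z^k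

def GammaOmega : Set ℂ := {s : ℂ | s.im ≠ 0 ∨ 0 < s.re}

def IsLogGamma (L : ℂ → ℂ) : Prop :=
  DifferentiableOn ℂ L GammaOmega ∧ (∀ s ∈ GammaOmega, Complex.exp (L s) = Complex.Gamma s) ∧
    L 1 = 0

def gseq (σ : ℝ) (n : ℕ) : ℂ := -(bernoulliPoly (n+1) (σ:ℂ)) / ((n:ℂ)*((n:ℂ)+1))

def gammam (m : ℕ) (σ : ℝ) : ℂ :=
  I^m * ∑ k ∈ Finset.range (m+1), obell (gseq σ) m k / (Nat.factorial k : ℂ)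

section Statement10Aux
open Topology

def DD (y : ℂ) : ℂ := Complex.exp ((π:ℂ)*y) + Complex.exp (-((π:ℂ)*y))

-- real inequality core
lemma core_ineq (X B : ℝ) (hX0 : 0 ≤ X) (hB : |B| ≤ X) :
    (Real.exp X / 2)^2 ≤
      (Real.exp X * Real.cos B + Real.exp (-X) * Real.cos B)^2
      + (Real.exp X * Real.sin B - Real.exp (-X) * Real.sin B)^2 := by
  have hEF : Real.exp X * Real.exp (-X) = 1 := by
    rw [← Real.exp_add]; simp
  have hs : Real.sin B ^2 + Real.cos B ^2 = 1 := Real.sin_sq_add_cos_sq B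
  rcases le_or_gt X 1 with hX | hX
  · have hc : Real.cos X ≤ Real.cos B := by
      rw [← Real.cos_abs B]
      exact Real.cos_le_cos_of_nonneg_of_le_pi (abs_nonneg _)
        (by nlinarith [Real.pi_gt_three]) hB
    have hcX : 0 ≤ Real.cos X := Real.cos_nonneg_of_mem_Icc
      ⟨by nlinarith [Real.pi_gt_three], by nlinarith [Real.pi_gt_three]⟩
    have hsin : Real.sin X ≤ X := Real.sin_le hX0
    have hsinX : 0 ≤ Real.sin X := Real.sin_nonneg_of_nonneg_of_le_pi hX0
        (by nlinarith [Real.pi_gt_three])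
    have hsX : Real.sin X ^2 + Real.cos X ^2 = 1 := Real.sin_sq_add_cos_sq X
    have hsinh : X ≤ (Real.exp X - Real.exp (-X))/2 := by
      have := Real.self_le_sinh_iff.mpr hX0
      rwa [Real.sinh_eq] at this
    have hE4 : Real.exp X ≤ 4 := by
      calc Real.exp X ≤ Real.exp 1 := Real.exp_le_exp.mpr hX
      _ ≤ 4 := by nlinarith [Real.exp_one_lt_d9]
    -- (E+F)^2 c² + (E−F)^2 s² ≥ 4(sinh² + cos²B) ≥ 4(sin²X + cos²X) = 4 ≥ (E/2)^2
    nlinarith [sq_nonneg (Real.sin B), sq_nonneg (Real.cos B), sq_nonneg (Real.exp X - Real.exp (-X)),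
      sq_nonneg (Real.exp X + Real.exp (-X)), Real.exp_pos X, Real.exp_pos (-X),
      mul_self_nonneg (Real.sin X - Real.sin B), sq_nonneg (Real.cos B - Real.cos X),
      mul_le_mul hc hc hcX (hcX.trans hc)]
  · -- X ≥ 1 : use sinh alone
    have hF : Real.exp (-X) ≤ Real.exp X / 2 := by
      have h2 : Real.exp (-X) ≤ Real.exp (-1)  := Real.exp_le_exp.mpr (by linarith)
      have h3 : Real.exp 1 ≤ Real.exp X := Real.exp_le_exp.mpr hX.le
      have he : (2:ℝ) ≤ Real.exp 1 := by nlinarith [Real.add_one_le_exp (1:ℝ)]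
      have : Real.exp (-1) * Real.exp 1 = 1 := by rw [← Real.exp_add]; simp
      nlinarith [Real.exp_pos (-1), Real.exp_pos (-X), Real.exp_pos X, Real.exp_pos 1]
    -- then (E−F) ≥ E/2 and (E+F) ≥ E/2, so both terms dominated
    nlinarith [sq_nonneg (Real.sin B), sq_nonneg (Real.cos B), Real.exp_pos X, Real.exp_pos (-X),
      sq_nonneg (Real.exp X - 2*Real.exp (-X))]

lemma core_ineq' (X B : ℝ) (hB : |B| ≤ |X|) :
    (Real.exp |X| / 2)^2 ≤
      (Real.exp X * Real.cos B + Real.exp (-X) * Real.cos B)^2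
      + (Real.exp X * Real.sin B - Real.exp (-X) * Real.sin B)^2 := by
  rcases le_or_gt 0 X with hX | hX
  · rw [_root_.abs_of_nonneg hX]
    rw [_root_.abs_of_nonneg hX] at hB
    exact core_ineq X B hX hB
  · rw [abs_of_neg hX]
    rw [abs_of_neg hX] at hB
    have := core_ineq (-X) B (by linarith) hB
    rw [neg_neg] at this
    nlinarith [this]

lemma dd_lb (y : ℂ) (h : |y.im| ≤ |y.re|) :
    Real.exp (π * |y.re|) / 2 ≤ ‖DD y‖ := by
  have hre : (DD y).re = Real.exp (π*y.re) * Real.cos (π*y.im)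
      + Real.exp (-(π*y.re)) * Real.cos (π*y.im) := by
    simp [DD, Complex.add_re, Complex.exp_re, Complex.neg_re, Complex.neg_im,
      Complex.mul_re, Complex.mul_im, Complex.ofReal_re, Complex.ofReal_im, Real.cos_neg]
  have him : (DD y).im = Real.exp (π*y.re) * Real.sin (π*y.im)
      - Real.exp (-(π*y.re)) * Real.sin (π*y.im) := by
    simp [DD, Complex.add_im, Complex.exp_im, Complex.neg_re, Complex.neg_im,
      Complex.mul_re, Complex.mul_im, Complex.ofReal_re, Complex.ofReal_im, Real.sin_neg]
    ring
  have hB : |π*y.im| ≤ |π*y.re| := by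
    rw [abs_mul, abs_mul]
    exact mul_le_mul_of_nonneg_left h (abs_nonneg _)
  have hked : (Real.exp |π*y.re| / 2)^2 ≤ Complex.normSq (DD y) := by
    rw [Complex.normSq_apply, hre, him]
    have := core_ineq' (π*y.re) (π*y.im) hB
    nlinarith [this]
  have habs : π * |y.re| = |π * y.re| := by
    rw [abs_mul, _root_.abs_of_nonneg Real.pi_pos.le]
  rw [habs, Complex.norm_def]
  have h0 : 0 ≤ Real.exp |π*y.re| / 2 := by positivity
  nlinarith [Real.sq_sqrt (Complex.normSq_nonneg (DD y)),
    Real.sqrt_nonneg (Complex.normSq (DD y)), hked,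
    sq_nonneg (Real.sqrt (Complex.normSq (DD y)) - Real.exp |π*y.re|/2)]

def EEx (u τ : ℂ) (y : ℂ) : ℂ := (π:ℂ)*I*τ*y^2 + (π:ℂ)*y*(τ - 2*u + 1)
def ffun (u τ : ℂ) (y : ℂ) : ℂ := Complex.exp (EEx u τ y) / DD y
def ffd (u τ : ℂ) (y : ℂ) : ℂ :=
  (Complex.exp (EEx u τ y) * (2*(π:ℂ)*I*τ*y + (π:ℂ)*(τ - 2*u + 1)) * DD y
   - Complex.exp (EEx u τ y) * ((π:ℂ)*Complex.exp ((π:ℂ)*y) - (π:ℂ)*Complex.exp (-((π:ℂ)*y)))) / (DD y)^2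
def pt (θ t : ℝ) : ℂ := Complex.exp ((θ:ℂ)*I) * (t:ℂ)

lemma pt_re (θ t : ℝ) : (pt θ t).re = Real.cos θ * t := by
  simp [pt, Complex.mul_re, Complex.exp_ofReal_mul_I_re, Complex.exp_ofReal_mul_I_im]

lemma pt_im (θ t : ℝ) : (pt θ t).im = Real.sin θ * t := by
  simp [pt, Complex.mul_im, Complex.exp_ofReal_mul_I_re, Complex.exp_ofReal_mul_I_im]

lemma pt_abs (θ t : ℝ) : ‖pt θ t‖ = |t| := by
  simp [pt, norm_mul, Complex.norm_exp_ofReal_mul_I, Complex.norm_real, Real.norm_eq_abs]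

lemma sin_le_cos_of_le (θ : ℝ) (hθ : |θ| ≤ π/4) : |Real.sin θ| ≤ Real.cos θ := by
  have h1 : 0 ≤ Real.cos (θ + π/4) := Real.cos_nonneg_of_mem_Icc
    ⟨by cases abs_le.mp hθ; linarith, by cases abs_le.mp hθ; linarith [Real.pi_pos]⟩
  have h2 : 0 ≤ Real.cos (-θ + π/4) := Real.cos_nonneg_of_mem_Icc
    ⟨by cases abs_le.mp hθ; linarith, by cases abs_le.mp hθ; linarith [Real.pi_pos]⟩
  rw [Real.cos_add] at h1
  rw [Real.cos_add, Real.cos_neg, Real.sin_neg] at h2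
  have hs2 : 0 < Real.sin (π/4) := by
    rw [Real.sin_pi_div_four]; positivity
  have hc2 : Real.cos (π/4) = Real.sin (π/4) := by
    rw [Real.sin_pi_div_four, Real.cos_pi_div_four]
  rw [hc2] at h1 h2
  cases abs_cases (Real.sin θ) with
  | inl h => rw [h.1]; nlinarith
  | inr h => rw [h.1]; nlinarith

lemma cos_ge_half (θ : ℝ) (hθ : |θ| ≤ π/4) : 1/2 ≤ Real.cos θ := by
  have h1 : Real.cos (π/4) ≤ Real.cos |θ| :=
    Real.cos_le_cos_of_nonneg_of_le_pi (abs_nonneg θ) (by linarith [Real.pi_pos]) hθ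
  rw [Real.cos_abs] at h1
  rw [Real.cos_pi_div_four] at h1
  nlinarith [Real.sq_sqrt (by norm_num : (2:ℝ) ≥ 0), Real.sqrt_nonneg 2]

lemma dd_pt_lb (θ t : ℝ) (hθ : |θ| ≤ π/4) :
    Real.exp (π * (Real.cos θ * |t|)) / 2 ≤ ‖DD (pt θ t)‖ := by
  have h0 : 0 ≤ Real.cos θ := le_trans (by norm_num) (cos_ge_half θ hθ)
  have h : |(pt θ t).im| ≤ |(pt θ t).re| := by
    rw [pt_re, pt_im, abs_mul, abs_mul]
    exact mul_le_mul_of_nonneg_right (by rw [_root_.abs_of_nonneg h0]; exact sin_le_cos_of_le θ hθ)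
      (abs_nonneg t)
  have := dd_lb (pt θ t) h
  rwa [pt_re, abs_mul, _root_.abs_of_nonneg h0] at this

lemma dd_pt_lb' (θ t : ℝ) (hθ : |θ| ≤ π/4) : 1/2 ≤ ‖DD (pt θ t)‖ := by
  refine le_trans ?_ (dd_pt_lb θ t hθ)
  have h0 : 0 ≤ Real.cos θ := le_trans (by norm_num) (cos_ge_half θ hθ)
  have : (0:ℝ) ≤ π * (Real.cos θ * |t|) := by positivity
  nlinarith [Real.exp_le_exp.mpr this, Real.exp_zero]

lemma dd_pt_ne (θ t : ℝ) (hθ : |θ| ≤ π/4) : DD (pt θ t) ≠ 0 := by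
  intro h
  have := dd_pt_lb' θ t hθ
  rw [h] at this; simp at this; linarith

lemma EEx_pt (u τ : ℂ) (θ t : ℝ) :
    EEx u τ (pt θ t) = ((π*t^2 : ℝ):ℂ) * (I*τ*Complex.exp (((2*θ : ℝ):ℂ)*I))
      + ((π*t : ℝ):ℂ) * (Complex.exp ((θ:ℂ)*I) * (τ - 2*u + 1)) := by
  have h : Complex.exp (((2*θ : ℝ):ℂ)*I) = Complex.exp ((θ:ℂ)*I) * Complex.exp ((θ:ℂ)*I) := by
    rw [← Complex.exp_add]; push_cast; ring_nf
  rw [EEx, pt, h]; push_cast; ring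

lemma EEx_pt_re (u τ : ℂ) (θ t : ℝ) :
    (EEx u τ (pt θ t)).re = -(π*t^2) * (τ.im * Real.cos (2*θ) + τ.re * Real.sin (2*θ))
      + (π*t) * (Complex.exp ((θ:ℂ)*I) * (τ - 2*u + 1)).re := by
  rw [EEx_pt, Complex.add_re, Complex.re_ofReal_mul, Complex.re_ofReal_mul]
  have h1 : (I*τ*Complex.exp (((2*θ : ℝ):ℂ)*I)).re
      = -(τ.im * Real.cos (2*θ) + τ.re * Real.sin (2*θ)) := by
    simp only [Complex.mul_re, Complex.mul_im, Complex.I_re, Complex.I_im,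
      Complex.exp_ofReal_mul_I_re, Complex.exp_ofReal_mul_I_im]
    ring
  rw [h1]; ring

lemma exp_EEx_bd (u τ : ℂ) (c4 θ t : ℝ)
    (hθ : c4 ≤ τ.im * Real.cos (2*θ) + τ.re * Real.sin (2*θ)) :
    ‖Complex.exp (EEx u τ (pt θ t))‖
      ≤ Real.exp (π*‖τ - 2*u + 1‖*|t| - π*c4*t^2) := by
  rw [Complex.norm_exp]
  apply Real.exp_le_exp.mpr
  rw [EEx_pt_re]
  have h2 : (π*t) * (Complex.exp ((θ:ℂ)*I) * (τ - 2*u + 1)).re ≤ π*‖τ - 2*u + 1‖*|t| := by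
    have ha : |(Complex.exp ((θ:ℂ)*I) * (τ - 2*u + 1)).re| ≤ ‖τ - 2*u + 1‖ := by
      refine le_trans (Complex.abs_re_le_norm _) ?_
      rw [norm_mul, Complex.norm_exp_ofReal_mul_I, one_mul]
    calc (π*t) * (Complex.exp ((θ:ℂ)*I) * (τ - 2*u + 1)).re
        ≤ |(π*t) * (Complex.exp ((θ:ℂ)*I) * (τ - 2*u + 1)).re| := le_abs_self _
      _ = π*|t| * |(Complex.exp ((θ:ℂ)*I) * (τ - 2*u + 1)).re| := by
          rw [abs_mul, abs_mul, _root_.abs_of_nonneg Real.pi_pos.le]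
      _ ≤ π*|t| * ‖τ - 2*u + 1‖ := by
          exact mul_le_mul_of_nonneg_left ha (by positivity)
      _ = π*‖τ - 2*u + 1‖*|t| := by ring
  nlinarith [sq_nonneg t, Real.pi_pos, mul_le_mul_of_nonneg_left hθ
    (mul_nonneg Real.pi_pos.le (sq_nonneg t))]

lemma ffun_bd (u τ : ℂ) (c4 θ t : ℝ) (hθ4 : |θ| ≤ π/4)
    (hθ : c4 ≤ τ.im * Real.cos (2*θ) + τ.re * Real.sin (2*θ)) :
    ‖ffun u τ (pt θ t)‖ ≤ 2 * Real.exp (π*‖τ - 2*u + 1‖*|t| - π*c4*t^2) := by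
  rw [ffun, norm_div]
  have h1 := exp_EEx_bd u τ c4 θ t hθ
  have h2 := dd_pt_lb' θ t hθ4
  have h3 : (0:ℝ) < ‖DD (pt θ t)‖ := lt_of_lt_of_le (by norm_num) h2
  rw [div_le_iff₀ h3]
  calc ‖Complex.exp (EEx u τ (pt θ t))‖
      ≤ Real.exp (π*‖τ - 2*u + 1‖*|t| - π*c4*t^2) := h1
    _ = 2 * Real.exp (π*‖τ - 2*u + 1‖*|t| - π*c4*t^2) * (1/2) := by ring
    _ ≤ 2 * Real.exp (π*‖τ - 2*u + 1‖*|t| - π*c4*t^2) * ‖DD (pt θ t)‖ := by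
        refine mul_le_mul_of_nonneg_left ?_ (by positivity)
        linarith

set_option maxHeartbeats 1000000 in
lemma ffd_bd (u τ : ℂ) (c4 θ t : ℝ) (hθ4 : |θ| ≤ π/4)
    (hθ : c4 ≤ τ.im * Real.cos (2*θ) + τ.re * Real.sin (2*θ)) :
    ‖ffd u τ (pt θ t)‖ ≤ (4*π*‖τ‖*|t| + 2*π*‖τ - 2*u + 1‖ + 8*π)
      * Real.exp (π*‖τ - 2*u + 1‖*|t| - π*c4*t^2) := by
  have h0 : 0 ≤ Real.cos θ := le_trans (by norm_num) (cos_ge_half θ hθ4)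
  set P := Real.exp (π * (Real.cos θ * |t|)) with hP
  have hP1 : (1:ℝ) ≤ P := by
    rw [hP, ← Real.exp_zero]
    exact Real.exp_le_exp.mpr (by positivity)
  have hDD : P/2 ≤ ‖DD (pt θ t)‖ := dd_pt_lb θ t hθ4
  have hDDpos : (0:ℝ) < ‖DD (pt θ t)‖ := by linarith
  set nN := ‖Complex.exp (EEx u τ (pt θ t))‖ with hnN
  have hN : nN ≤ Real.exp (π*‖τ - 2*u + 1‖*|t| - π*c4*t^2) := exp_EEx_bd u τ c4 θ t hθ
  have hA : ‖2*(π:ℂ)*I*τ*(pt θ t) + (π:ℂ)*(τ - 2*u + 1)‖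
      ≤ 2*π*‖τ‖*|t| + π*‖τ - 2*u + 1‖ := by
    refine le_trans (norm_add_le _ _) ?_
    have e1 : ‖2*(π:ℂ)*I*τ*(pt θ t)‖ = 2*π*‖τ‖*|t| := by
      rw [norm_mul, norm_mul, norm_mul, norm_mul, pt_abs]
      simp only [Complex.norm_real, Real.norm_eq_abs, Complex.norm_two, Complex.norm_I,
        _root_.abs_of_nonneg Real.pi_pos.le]
      ring
    have e2 : ‖(π:ℂ)*(τ - 2*u + 1)‖ = π*‖τ - 2*u + 1‖ := by
      rw [norm_mul, Complex.norm_real, Real.norm_eq_abs, _root_.abs_of_nonneg Real.pi_pos.le]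
    rw [e1, e2]
  have hS : ‖(π:ℂ)*Complex.exp ((π:ℂ)*(pt θ t)) - (π:ℂ)*Complex.exp (-((π:ℂ)*(pt θ t)))‖
      ≤ 2*π*P := by
    refine le_trans (norm_sub_le _ _) ?_
    rw [norm_mul, norm_mul, Complex.norm_real, Real.norm_eq_abs, _root_.abs_of_nonneg Real.pi_pos.le,
      Complex.norm_exp, Complex.norm_exp]
    have hre1 : ((π:ℂ)*(pt θ t)).re = π * (Real.cos θ * t) := by
      rw [Complex.re_ofReal_mul, pt_re]
    have hre2 : (-((π:ℂ)*(pt θ t))).re = -(π * (Real.cos θ * t)) := by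
      rw [Complex.neg_re, hre1]
    rw [hre1, hre2]
    have b1 : Real.exp (π * (Real.cos θ * t)) ≤ P := by
      apply Real.exp_le_exp.mpr
      have : Real.cos θ * t ≤ Real.cos θ * |t| :=
        mul_le_mul_of_nonneg_left (le_abs_self t) h0
      nlinarith [Real.pi_pos]
    have b2 : Real.exp (-(π * (Real.cos θ * t))) ≤ P := by
      apply Real.exp_le_exp.mpr
      have : -(Real.cos θ * t) ≤ Real.cos θ * |t| := by
        have := neg_abs_le t
        nlinarith
      nlinarith [Real.pi_pos]
    nlinarith [Real.pi_pos]
  -- assemble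
  rw [ffd, norm_div]
  rw [norm_pow]
  have habs : ‖Complex.exp (EEx u τ (pt θ t)) * (2*(π:ℂ)*I*τ*(pt θ t) + (π:ℂ)*(τ - 2*u + 1)) * DD (pt θ t)
      - Complex.exp (EEx u τ (pt θ t)) * ((π:ℂ)*Complex.exp ((π:ℂ)*(pt θ t)) - (π:ℂ)*Complex.exp (-((π:ℂ)*(pt θ t))))‖
      ≤ nN * (2*π*‖τ‖*|t| + π*‖τ - 2*u + 1‖) * ‖DD (pt θ t)‖ + nN * (2*π*P) := by
    refine le_trans (norm_sub_le _ _) ?_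
    rw [norm_mul, norm_mul, norm_mul]
    have g1 : 0 ≤ nN := norm_nonneg _
    have g2 := norm_nonneg (DD (pt θ t))
    nlinarith [hA, hS, mul_le_mul_of_nonneg_left hA g1, mul_le_mul_of_nonneg_left hS g1,
      mul_le_mul_of_nonneg_right (mul_le_mul_of_nonneg_left hA g1) g2]
  rw [div_le_iff₀ (by positivity)]
  refine le_trans habs ?_
  have hQ : ‖DD (pt θ t)‖ ^ 2 ≥ (P/2)^2 := by nlinarith
  have hNn : 0 ≤ nN := norm_nonneg _
  have hEpos : (0:ℝ) < Real.exp (π*‖τ - 2*u + 1‖*|t| - π*c4*t^2) := Real.exp_pos _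
  -- nN*(A)*dd + nN*2πP ≤ RHS * dd^2
  have hdd := norm_nonneg (DD (pt θ t))
  have hAn : (0:ℝ) ≤ 2*π*‖τ‖*|t| + π*‖τ - 2*u + 1‖ := by positivity
  set d := ‖DD (pt θ t)‖ with hd
  set A := 2*π*‖τ‖*|t| + π*‖τ - 2*u + 1‖ with hAdef
  set E := Real.exp (π*‖τ - 2*u + 1‖*|t| - π*c4*t^2) with hE
  have hdhalf : (1:ℝ)/2 ≤ d := by linarith
  have hd2 : d ≤ 2 * d^2 := by nlinarith
  have hP4 : P ≤ 4 * d^2 := by nlinarith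
  have m1 : nN * A * d ≤ E * A * (2*d^2) := by
    have s1 : nN * A * d ≤ E * A * d :=
      mul_le_mul_of_nonneg_right (mul_le_mul_of_nonneg_right hN hAn) hdd
    have s2 : E * A * d ≤ E * A * (2*d^2) :=
      mul_le_mul_of_nonneg_left hd2 (mul_nonneg hEpos.le hAn)
    linarith
  have m2 : nN * (2*π*P) ≤ E * (8*π*d^2) := by
    have s1 : nN * (2*π*P) ≤ E * (2*π*P) :=
      mul_le_mul_of_nonneg_right hN (by positivity)
    have s2 : E * (2*π*P) ≤ E * (2*π*(4*d^2)) := by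
      have := mul_le_mul_of_nonneg_left hP4 (by positivity : (0:ℝ) ≤ 2*π)
      exact mul_le_mul_of_nonneg_left (by linarith) hEpos.le
    have : (2:ℝ)*π*(4*d^2) = 8*π*d^2 := by ring
    rw [this] at s2
    linarith
  have heq : E * A * (2*d^2) + E * (8*π*d^2) = (4*π*‖τ‖*|t| + 2*π*‖τ - 2*u + 1‖ + 8*π) * E * d^2 := by
    rw [hAdef]; ring
  linarith

lemma integrable_poly_gauss (a r c1 c2 c3 : ℝ) (ha : 0 < a) (hc1 : 0 ≤ c1) (hc2 : 0 ≤ c2)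
    (hc3 : 0 ≤ c3) :
    Integrable (fun t : ℝ => (c1 + c2*|t| + c3*t^2) * Real.exp (r*|t| - a*t^2)) := by
  have hmaj : Integrable (fun t : ℝ =>
      (Real.exp (r^2/a) * (c1 + (c2+c3)*(1 + 4/a))) * Real.exp (-(a/2)*t^2)) :=
    (integrable_exp_neg_mul_sq (half_pos ha)).const_mul _
  refine hmaj.mono' ?_ ?_
  · apply Continuous.aestronglyMeasurable
    have : Continuous fun t : ℝ => (c1 + c2*|t| + c3*t^2) := by continuity
    exact this.mul (Real.continuous_exp.comp (by continuity))
  · filter_upwards with t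
    have hE : (0:ℝ) < Real.exp (r*|t| - a*t^2) := Real.exp_pos _
    have hcoef : (0:ℝ) ≤ c1 + c2*|t| + c3*t^2 := by positivity
    rw [Real.norm_eq_abs, _root_.abs_of_nonneg (by positivity)]
    have hsplit : r*|t| - a*t^2 = (r*|t| - (a/4)*t^2) + (-((a/4)*t^2)) + (-((a/2)*t^2)) := by
      ring
    rw [hsplit, Real.exp_add, Real.exp_add]
    have e1 : Real.exp (r*|t| - (a/4)*t^2) ≤ Real.exp (r^2/a) := by
      apply Real.exp_le_exp.mpr
      rw [le_div_iff₀ ha]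
      rcases abs_cases t with h | h <;> rw [h.1] <;>
        nlinarith [sq_nonneg (a*t - 2*r), sq_nonneg (a*t + 2*r)]
    have e2a : t^2 * Real.exp (-((a/4)*t^2)) ≤ 4/a := by
      have h4 : (a/4)*t^2 ≤ Real.exp ((a/4)*t^2) := by
        nlinarith [Real.add_one_le_exp ((a/4)*t^2)]
      have hEp : (0:ℝ) < Real.exp ((a/4)*t^2) := Real.exp_pos _
      have h5 := mul_le_mul_of_nonneg_left h4 (by positivity : (0:ℝ) ≤ 4/a)
      have h6 : (4/a) * ((a/4)*t^2) = t^2 := by field_simp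
      rw [Real.exp_neg, ← div_eq_mul_inv, div_le_iff₀ hEp]
      rw [h6] at h5
      linarith
    have e2b : Real.exp (-((a/4)*t^2)) ≤ 1 := by
      rw [← Real.exp_zero]
      apply Real.exp_le_exp.mpr
      nlinarith
    have e2 : (c1 + c2*|t| + c3*t^2) * Real.exp (-((a/4)*t^2)) ≤ c1 + (c2+c3)*(1 + 4/a) := by
      have habs1 : |t| ≤ 1 + t^2 := by nlinarith [_root_.sq_abs t, sq_nonneg (|t| - 1), abs_nonneg t]
      have hEp := Real.exp_pos (-((a/4)*t^2))
      nlinarith [mul_le_mul_of_nonneg_left e2b hc1, mul_le_mul_of_nonneg_left e2b hc2,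
        mul_le_mul_of_nonneg_left e2a hc2, mul_le_mul_of_nonneg_left e2a hc3,
        mul_le_mul_of_nonneg_left (mul_le_mul_of_nonneg_right habs1 hEp.le) hc2]
    calc (c1 + c2*|t| + c3*t^2) * (Real.exp (r*|t| - (a/4)*t^2) * Real.exp (-((a/4)*t^2)) * Real.exp (-((a/2)*t^2)))
        = (Real.exp (r*|t| - (a/4)*t^2)) * ((c1 + c2*|t| + c3*t^2) * Real.exp (-((a/4)*t^2))) * Real.exp (-((a/2)*t^2)) := by ring
      _ ≤ (Real.exp (r^2/a)) * (c1 + (c2+c3)*(1 + 4/a)) * Real.exp (-((a/2)*t^2)) := by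
          have g1 := Real.exp_pos (r*|t| - (a/4)*t^2)
          have g2 : (0:ℝ) ≤ (c1 + c2*|t| + c3*t^2) * Real.exp (-((a/4)*t^2)) := by positivity
          have g3 := Real.exp_pos (-((a/2)*t^2))
          apply mul_le_mul_of_nonneg_right _ g3.le
          calc (Real.exp (r*|t| - (a/4)*t^2)) * ((c1 + c2*|t| + c3*t^2) * Real.exp (-((a/4)*t^2)))
              ≤ (Real.exp (r^2/a)) * ((c1 + c2*|t| + c3*t^2) * Real.exp (-((a/4)*t^2))) :=
                mul_le_mul_of_nonneg_right e1 g2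
            _ ≤ (Real.exp (r^2/a)) * (c1 + (c2+c3)*(1 + 4/a)) :=
                mul_le_mul_of_nonneg_left e2 (Real.exp_pos _).le
      _ = (Real.exp (r^2/a) * (c1 + (c2+c3)*(1 + 4/a))) * Real.exp (-(a/2)*t^2) := by
          rw [neg_mul]

def gg (u τ : ℂ) (θ t : ℝ) : ℂ := Complex.exp ((θ:ℂ)*I) * ffun u τ (pt θ t)
def ggd (u τ : ℂ) (θ t : ℝ) : ℂ :=
  I * Complex.exp ((θ:ℂ)*I) * ffun u τ (pt θ t)
  + I * (t:ℂ) * Complex.exp ((θ:ℂ)*I)^2 * ffd u τ (pt θ t)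
def FF (u τ : ℂ) (θ : ℝ) : ℂ := ∫ t : ℝ, gg u τ θ t

lemma hasDerivAt_ffun (u τ : ℂ) (y : ℂ) (hy : DD y ≠ 0) :
    HasDerivAt (ffun u τ) (ffd u τ y) y := by
  have hE : HasDerivAt (fun y : ℂ => EEx u τ y) (2*(π:ℂ)*I*τ*y + (π:ℂ)*(τ - 2*u + 1)) y := by
    have h1 : HasDerivAt (fun y : ℂ => (π:ℂ)*I*τ*y^2 + ((π:ℂ)*(τ - 2*u + 1))*y)
        ((π:ℂ)*I*τ*(2*y^1) + ((π:ℂ)*(τ - 2*u + 1))*1) y := by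
      exact (((hasDerivAt_pow 2 y).const_mul ((π:ℂ)*I*τ))).add
        ((hasDerivAt_id y).const_mul ((π:ℂ)*(τ - 2*u + 1)))
    have h2 : HasDerivAt (fun y : ℂ => EEx u τ y)
        ((π:ℂ)*I*τ*(2*y^1) + ((π:ℂ)*(τ - 2*u + 1))*1) y :=
      h1.congr_of_eventuallyEq (Filter.Eventually.of_forall fun x => by simp only [EEx]; ring)
    convert h2 using 1; ring
  have hN : HasDerivAt (fun y : ℂ => Complex.exp (EEx u τ y))
      (Complex.exp (EEx u τ y) * (2*(π:ℂ)*I*τ*y + (π:ℂ)*(τ - 2*u + 1))) y := hE.cexp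
  have hD : HasDerivAt DD ((π:ℂ)*Complex.exp ((π:ℂ)*y) - (π:ℂ)*Complex.exp (-((π:ℂ)*y))) y := by
    have d1 : HasDerivAt (fun y : ℂ => Complex.exp ((π:ℂ)*y)) (Complex.exp ((π:ℂ)*y) * ((π:ℂ)*1)) y :=
      ((hasDerivAt_id y).const_mul (π:ℂ)).cexp
    have d2 : HasDerivAt (fun y : ℂ => Complex.exp (-((π:ℂ)*y))) (Complex.exp (-((π:ℂ)*y)) * (-((π:ℂ)*1))) y :=
      (((hasDerivAt_id y).const_mul (π:ℂ)).neg).cexp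
    have := d1.add d2
    have h3 : HasDerivAt DD (Complex.exp ((π:ℂ)*y) * ((π:ℂ)*1) + Complex.exp (-((π:ℂ)*y)) * (-((π:ℂ)*1))) y :=
      this.congr_of_eventuallyEq (Filter.Eventually.of_forall fun x => by simp only [DD, Pi.add_apply])
    convert h3 using 1; ring
  have := hN.div hD hy
  exact this

lemma hasDerivAt_pt_theta (θ t : ℝ) :
    HasDerivAt (fun θ : ℝ => pt θ t) (I * pt θ t) θ := by
  have h1 : HasDerivAt (fun θ : ℝ => ((θ:ℝ):ℂ)) 1 θ := (hasDerivAt_id θ).ofReal_comp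
  have h2 : HasDerivAt (fun θ : ℝ => (θ:ℂ)*I) (1*I) θ := h1.mul_const I
  have h3 := h2.cexp.mul_const (t:ℂ)
  have h4 : HasDerivAt (fun θ : ℝ => pt θ t)
      (Complex.exp ((θ:ℂ)*I) * (1*I) * (t:ℂ)) θ :=
    h3.congr_of_eventuallyEq (Filter.Eventually.of_forall fun x => by simp only [pt])
  convert h4 using 1
  simp only [pt]; ring

lemma hasDerivAt_gg_theta (u τ : ℂ) (θ t : ℝ) (hθ : |θ| ≤ π/4) :
    HasDerivAt (fun θ : ℝ => gg u τ θ t) (ggd u τ θ t) θ := by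
  have hc : HasDerivAt (fun θ : ℝ => pt θ t) (I * pt θ t) θ := hasDerivAt_pt_theta θ t
  have hf : HasDerivAt (ffun u τ) (ffd u τ (pt θ t)) (pt θ t) :=
    hasDerivAt_ffun u τ (pt θ t) (dd_pt_ne θ t hθ)
  have hcomp : HasDerivAt (fun θ : ℝ => ffun u τ (pt θ t)) ((I * pt θ t) • ffd u τ (pt θ t)) θ :=
    by have := HasDerivAt.scomp θ hf hc; exact this
  have h2 : HasDerivAt (fun θ : ℝ => (θ:ℂ)*I) (1*I) θ :=
    ((hasDerivAt_id θ).ofReal_comp).mul_const I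
  have hmul := h2.cexp.mul hcomp
  have h5 : HasDerivAt (fun θ : ℝ => gg u τ θ t)
      (Complex.exp ((θ:ℂ)*I) * (1*I) * ffun u τ (pt θ t)
        + Complex.exp ((θ:ℂ)*I) * ((I * pt θ t) • ffd u τ (pt θ t))) θ :=
    hmul.congr_of_eventuallyEq (Filter.Eventually.of_forall fun x => by simp only [gg, Pi.mul_apply])
  convert h5 using 1
  simp only [ggd, pt]
  simp only [smul_eq_mul]
  ring

lemma hasDerivAt_h_t (u τ : ℂ) (θ t : ℝ) (hθ : |θ| ≤ π/4) :
    HasDerivAt (fun t : ℝ => I * (t:ℂ) * gg u τ θ t) (ggd u τ θ t) t := by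
  have hc : HasDerivAt (fun t : ℝ => pt θ t) (Complex.exp ((θ:ℂ)*I)) t := by
    have h1 : HasDerivAt (fun t : ℝ => ((t:ℝ):ℂ)) 1 t := (hasDerivAt_id t).ofReal_comp
    have h2 := h1.const_mul (Complex.exp ((θ:ℂ)*I))
    have h3 : HasDerivAt (fun t : ℝ => pt θ t) (Complex.exp ((θ:ℂ)*I) * 1) t :=
      h2.congr_of_eventuallyEq (Filter.Eventually.of_forall fun x => by simp only [pt])
    simpa using h3
  have hf : HasDerivAt (ffun u τ) (ffd u τ (pt θ t)) (pt θ t) :=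
    hasDerivAt_ffun u τ (pt θ t) (dd_pt_ne θ t hθ)
  have hcomp : HasDerivAt (fun t : ℝ => ffun u τ (pt θ t))
      (Complex.exp ((θ:ℂ)*I) • ffd u τ (pt θ t)) t := HasDerivAt.scomp t hf hc
  have hlin : HasDerivAt (fun t : ℝ => I * (t:ℂ) * Complex.exp ((θ:ℂ)*I))
      (I * Complex.exp ((θ:ℂ)*I)) t := by
    have h1 : HasDerivAt (fun t : ℝ => ((t:ℝ):ℂ)) 1 t := (hasDerivAt_id t).ofReal_comp
    have h2 := (h1.const_mul I).mul_const (Complex.exp ((θ:ℂ)*I))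
    simpa using h2
  have hmul := hlin.mul hcomp
  have h5 : HasDerivAt (fun t : ℝ => I * (t:ℂ) * gg u τ θ t)
      (I * Complex.exp ((θ:ℂ)*I) * ffun u τ (pt θ t)
        + I * (t:ℂ) * Complex.exp ((θ:ℂ)*I) * (Complex.exp ((θ:ℂ)*I) • ffd u τ (pt θ t))) t :=
    hmul.congr_of_eventuallyEq (Filter.Eventually.of_forall fun x => by simp only [gg, Pi.mul_apply]; ring)
  convert h5 using 1
  simp only [ggd]
  simp only [smul_eq_mul]
  ring

lemma continuous_pt_t (θ : ℝ) : Continuous fun t : ℝ => pt θ t := by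
  simp only [pt]; exact continuous_const.mul Complex.continuous_ofReal

lemma continuous_EEx (u τ : ℂ) : Continuous (EEx u τ) := by
  unfold EEx; continuity

lemma continuous_DD : Continuous DD := by
  unfold DD; continuity

lemma continuous_gg_t (u τ : ℂ) (θ : ℝ) (hθ : |θ| ≤ π/4) :
    Continuous fun t : ℝ => gg u τ θ t := by
  simp only [gg, ffun]
  refine continuous_const.mul (Continuous.div ?_ ?_ fun t => dd_pt_ne θ t hθ)
  · exact Complex.continuous_exp.comp ((continuous_EEx u τ).comp (continuous_pt_t θ))
  · exact continuous_DD.comp (continuous_pt_t θ)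

lemma continuous_ggd_t (u τ : ℂ) (θ : ℝ) (hθ : |θ| ≤ π/4) :
    Continuous fun t : ℝ => ggd u τ θ t := by
  have hpt := continuous_pt_t θ
  have hN : Continuous fun t : ℝ => Complex.exp (EEx u τ (pt θ t)) :=
    Complex.continuous_exp.comp ((continuous_EEx u τ).comp hpt)
  have hD : Continuous fun t : ℝ => DD (pt θ t) := continuous_DD.comp hpt
  have hffd : Continuous fun t : ℝ => ffd u τ (pt θ t) := by
    simp only [ffd]
    refine Continuous.div ?_ (hD.pow 2) fun t => pow_ne_zero 2 (dd_pt_ne θ t hθ)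
    refine Continuous.sub (Continuous.mul (hN.mul ?_) hD) (hN.mul ?_)
    · exact ((continuous_const.mul hpt).add continuous_const)
    · refine Continuous.sub (continuous_const.mul ?_) (continuous_const.mul ?_)
      · exact Complex.continuous_exp.comp (continuous_const.mul hpt)
      · exact Complex.continuous_exp.comp (continuous_const.mul hpt).neg
  have hffun : Continuous fun t : ℝ => ffun u τ (pt θ t) := by
    simp only [ffun]
    exact Continuous.div hN hD fun t => dd_pt_ne θ t hθ
  simp only [ggd]
  refine Continuous.add (continuous_const.mul hffun) ?_
  exact Continuous.mul (by continuity) hffd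

lemma continuousOn_gg_theta (u τ : ℂ) (t : ℝ) :
    ContinuousOn (fun θ : ℝ => gg u τ θ t) (Set.Icc (-(π/4)) (π/4)) := by
  have hpt : Continuous fun θ : ℝ => pt θ t := by
    simp only [pt]
    exact (Complex.continuous_exp.comp (Complex.continuous_ofReal.mul continuous_const)).mul
      continuous_const
  have hN : Continuous fun θ : ℝ => Complex.exp (EEx u τ (pt θ t)) :=
    Complex.continuous_exp.comp ((continuous_EEx u τ).comp hpt)
  have hD : Continuous fun θ : ℝ => DD (pt θ t) := continuous_DD.comp hpt
  have hexp : Continuous fun θ : ℝ => Complex.exp ((θ:ℂ)*I) :=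
    Complex.continuous_exp.comp (Complex.continuous_ofReal.mul continuous_const)
  simp only [gg, ffun]
  refine ContinuousOn.mul hexp.continuousOn ?_
  refine ContinuousOn.div hN.continuousOn hD.continuousOn ?_
  intro θ hθ
  exact dd_pt_ne θ t (abs_le.mpr ⟨hθ.1, hθ.2⟩)

lemma region (τ : ℂ) (h1 : 0 < τ.re) (h2 : 0 < τ.im) (θ : ℝ)
    (hlo : -(min (π/8) (τ.im/(8*τ.re))) ≤ θ) (hhi : θ ≤ π/4) :
    min τ.re τ.im / 4 ≤ τ.im * Real.cos (2*θ) + τ.re * Real.sin (2*θ) := by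
  have hm1 : min τ.re τ.im ≤ τ.re := min_le_left _ _
  have hm2 : min τ.re τ.im ≤ τ.im := min_le_right _ _
  have hmpos : 0 < min τ.re τ.im := lt_min h1 h2
  rcases le_or_gt 0 θ with hθ0 | hθ0
  · have hc : 0 ≤ Real.cos (2*θ) := Real.cos_nonneg_of_mem_Icc
      ⟨by linarith [Real.pi_pos], by linarith⟩
    have hs : 0 ≤ Real.sin (2*θ) := Real.sin_nonneg_of_nonneg_of_le_pi
      (by linarith) (by linarith [Real.pi_pos])
    have hc1 : Real.cos (2*θ) ≤ 1 := Real.cos_le_one _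
    have hs1 : Real.sin (2*θ) ≤ 1 := Real.sin_le_one _
    have hcs : 1 ≤ Real.cos (2*θ) + Real.sin (2*θ) := by
      nlinarith [Real.sin_sq_add_cos_sq (2*θ)]
    nlinarith [mul_le_mul_of_nonneg_left hcs hmpos.le]
  · have hδ1 : -(π/8) ≤ θ := le_trans (neg_le_neg (min_le_left _ _)) hlo
    have hδ2 : -(τ.im/(8*τ.re)) ≤ θ := le_trans (neg_le_neg (min_le_right _ _)) hlo
    have hc : Real.cos (π/4) ≤ Real.cos (2*θ) := by
      rw [← Real.cos_abs (2*θ)]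
      apply Real.cos_le_cos_of_nonneg_of_le_pi (abs_nonneg _) (by linarith [Real.pi_pos])
      rw [abs_le]
      constructor <;> [linarith [Real.pi_pos]; linarith [Real.pi_pos]]
    have hc2 : (1:ℝ)/2 ≤ Real.cos (2*θ) := by
      refine le_trans ?_ hc
      rw [Real.cos_pi_div_four]
      nlinarith [Real.sq_sqrt (by norm_num : (2:ℝ) ≥ 0), Real.sqrt_nonneg 2]
    have hs : 2*θ ≤ Real.sin (2*θ) := by
      have h := Real.sin_le (by linarith : 0 ≤ -(2*θ))
      rw [Real.sin_neg] at h
      linarith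
    have hre : τ.re * (2*θ) ≥ -(τ.im/4) := by
      have : θ ≥ -(τ.im/(8*τ.re)) := hδ2
      have h8 : 0 < 8*τ.re := by linarith
      have h9 := mul_le_mul_of_nonneg_left (neg_le_neg this) h1.le
      -- τ.re * (-θ) ≤ τ.re * (τ.im/(8τ.re))
      have heq : τ.re * (τ.im/(8*τ.re)) = τ.im/8 := by field_simp
      nlinarith
    nlinarith [mul_le_mul_of_nonneg_left hs h1.le]

lemma tendsto_bd_top (R A : ℝ) (hA : 0 < A) :
    Filter.Tendsto (fun t : ℝ => |t| * (2 * Real.exp (R*|t| - A*t^2)))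
      Filter.atTop (𝓝 0) := by
  have hmain : Filter.Tendsto (fun t : ℝ => 2 * (t * Real.exp (-t))) Filter.atTop (𝓝 0) := by
    have := tendsto_pow_mul_exp_neg_atTop_nhds_zero 1
    simpa using (this.const_mul 2).congr (fun t => by ring)
  refine squeeze_zero' ?_ ?_ hmain
  · filter_upwards [Filter.eventually_ge_atTop (0:ℝ)] with t ht
    positivity
  · filter_upwards [Filter.eventually_ge_atTop (max 1 ((R+1)/A))] with t ht
    have ht1 : (1:ℝ) ≤ t := le_trans (le_max_left _ _) ht
    have ht2 : (R+1)/A ≤ t := le_trans (le_max_right _ _) ht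
    have ht0 : 0 ≤ t := by linarith
    rw [_root_.abs_of_nonneg ht0]
    have hexp : Real.exp (R*t - A*t^2) ≤ Real.exp (-t) := by
      apply Real.exp_le_exp.mpr
      rw [div_le_iff₀ hA] at ht2
      nlinarith
    nlinarith [Real.exp_pos (R*t - A*t^2), Real.exp_pos (-t),
      mul_le_mul_of_nonneg_left hexp (by linarith : (0:ℝ) ≤ 2*t)]

lemma tendsto_hh (u τ : ℂ) (c4 θ : ℝ) (hc4 : 0 < c4) (hθ4 : |θ| ≤ π/4)
    (hθ : c4 ≤ τ.im * Real.cos (2*θ) + τ.re * Real.sin (2*θ)) :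
    Filter.Tendsto (fun t : ℝ => I * (t:ℂ) * gg u τ θ t) Filter.atTop (𝓝 0)
    ∧ Filter.Tendsto (fun t : ℝ => I * (t:ℂ) * gg u τ θ t) Filter.atBot (𝓝 0) := by
  set R := π*‖τ - 2*u + 1‖ with hR
  set A := π*c4 with hA
  have hApos : 0 < A := by rw [hA]; positivity
  have hbd : ∀ t : ℝ, ‖I * (t:ℂ) * gg u τ θ t‖ ≤ |t| * (2 * Real.exp (R*|t| - A*t^2)) := by
    intro t
    have h1 : ‖gg u τ θ t‖ ≤ 2 * Real.exp (R*|t| - A*t^2) := by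
      rw [gg, norm_mul,  Complex.norm_exp_ofReal_mul_I, one_mul]
      have := ffun_bd u τ c4 θ t hθ4 hθ
      calc ‖ffun u τ (pt θ t)‖ ≤ 2 * Real.exp (π*‖τ - 2*u + 1‖*|t| - π*c4*t^2) := this
        _ = 2 * Real.exp (R*|t| - A*t^2) := by rw [hR, hA]
    calc ‖I * (t:ℂ) * gg u τ θ t‖ = |t| * ‖gg u τ θ t‖ := by
          rw [norm_mul, norm_mul, Complex.norm_I, one_mul, Complex.norm_real, Real.norm_eq_abs]
      _ ≤ |t| * (2 * Real.exp (R*|t| - A*t^2)) :=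
          mul_le_mul_of_nonneg_left h1 (abs_nonneg t)
  constructor
  · exact squeeze_zero_norm hbd (tendsto_bd_top R A hApos)
  · have hcomp : Filter.Tendsto (fun t : ℝ => |t| * (2 * Real.exp (R*|t| - A*t^2)))
        Filter.atBot (𝓝 0) := by
      have := (tendsto_bd_top R A hApos).comp Filter.tendsto_neg_atBot_atTop
      refine this.congr (fun t => ?_)
      simp only [Function.comp]
      rw [abs_neg, neg_sq]
    exact squeeze_zero_norm hbd hcomp

lemma integrable_ggd (u τ : ℂ) (c4 θ : ℝ) (hc4 : 0 < c4) (hθ4 : |θ| ≤ π/4)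
    (hθ : c4 ≤ τ.im * Real.cos (2*θ) + τ.re * Real.sin (2*θ)) :
    Integrable (fun t : ℝ => ggd u τ θ t) := by
  have hmaj := integrable_poly_gauss (π*c4) (π*‖τ - 2*u + 1‖)
    2 (2*π*‖τ - 2*u + 1‖ + 8*π) (4*π*‖τ‖) (by positivity) (by norm_num) (by positivity)
    (by positivity)
  refine hmaj.mono' (continuous_ggd_t u τ θ hθ4).aestronglyMeasurable ?_
  filter_upwards with t
  have h1 : ‖ffun u τ (pt θ t)‖ ≤ 2 * Real.exp (π*‖τ - 2*u + 1‖*|t| - π*c4*t^2) :=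
    ffun_bd u τ c4 θ t hθ4 hθ
  have h2 : ‖ffd u τ (pt θ t)‖ ≤ (4*π*‖τ‖*|t| + 2*π*‖τ - 2*u + 1‖ + 8*π)
      * Real.exp (π*‖τ - 2*u + 1‖*|t| - π*c4*t^2) := ffd_bd u τ c4 θ t hθ4 hθ
  have hE := Real.exp_pos (π*‖τ - 2*u + 1‖*|t| - π*c4*t^2)
  have hn : ‖ggd u τ θ t‖ ≤ ‖ffun u τ (pt θ t)‖ + |t| * ‖ffd u τ (pt θ t)‖ := by
    rw [ggd]
    refine le_trans (norm_add_le _ _) ?_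
    have e1 : ‖I * Complex.exp ((θ:ℂ)*I) * ffun u τ (pt θ t)‖ = ‖ffun u τ (pt θ t)‖ := by
      rw [norm_mul, norm_mul, Complex.norm_I, one_mul, 
        Complex.norm_exp_ofReal_mul_I, one_mul]
    have e2 : ‖I * (t:ℂ) * Complex.exp ((θ:ℂ)*I)^2 * ffd u τ (pt θ t)‖ = |t| * ‖ffd u τ (pt θ t)‖ := by
      rw [norm_mul, norm_mul, norm_mul, Complex.norm_I, one_mul, norm_pow,
         Complex.norm_exp_ofReal_mul_I, one_pow, mul_one,
        Complex.norm_real, Real.norm_eq_abs]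
    rw [e1, e2]
  refine le_trans hn ?_
  have h3 : |t| * ‖ffd u τ (pt θ t)‖ ≤ |t| * ((4*π*‖τ‖*|t| + 2*π*‖τ - 2*u + 1‖ + 8*π)
      * Real.exp (π*‖τ - 2*u + 1‖*|t| - π*c4*t^2)) :=
    mul_le_mul_of_nonneg_left h2 (abs_nonneg t)
  calc ‖ffun u τ (pt θ t)‖ + |t| * ‖ffd u τ (pt θ t)‖
      ≤ 2 * Real.exp (π*‖τ - 2*u + 1‖*|t| - π*c4*t^2)
        + |t| * ((4*π*‖τ‖*|t| + 2*π*‖τ - 2*u + 1‖ + 8*π)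
          * Real.exp (π*‖τ - 2*u + 1‖*|t| - π*c4*t^2)) := by linarith
    _ = (2 + (2*π*‖τ - 2*u + 1‖ + 8*π)*|t| + (4*π*‖τ‖)*t^2)
        * Real.exp (π*‖τ - 2*u + 1‖*|t| - π*c4*t^2) := by
        have ht2 : |t| * |t| = t^2 := by rw [← _root_.sq_abs t]; ring
        linear_combination (4*π*‖τ‖*Real.exp (π*‖τ - 2*u + 1‖*|t| - π*c4*t^2)) * ht2

lemma integrable_gg (u τ : ℂ) (c4 θ : ℝ) (hc4 : 0 < c4) (hθ4 : |θ| ≤ π/4)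
    (hθ : c4 ≤ τ.im * Real.cos (2*θ) + τ.re * Real.sin (2*θ)) :
    Integrable (fun t : ℝ => gg u τ θ t) := by
  have hmaj := integrable_poly_gauss (π*c4) (π*‖τ - 2*u + 1‖)
    2 0 0 (by positivity) (by norm_num) (by norm_num) (by norm_num)
  refine hmaj.mono' (continuous_gg_t u τ θ hθ4).aestronglyMeasurable ?_
  filter_upwards with t
  have h1 : ‖ffun u τ (pt θ t)‖ ≤ 2 * Real.exp (π*‖τ - 2*u + 1‖*|t| - π*c4*t^2) :=
    ffun_bd u τ c4 θ t hθ4 hθ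
  have e1 : ‖gg u τ θ t‖ = ‖ffun u τ (pt θ t)‖ := by
    rw [gg, norm_mul,  Complex.norm_exp_ofReal_mul_I, one_mul]
  rw [e1]
  calc ‖ffun u τ (pt θ t)‖ ≤ 2 * Real.exp (π*‖τ - 2*u + 1‖*|t| - π*c4*t^2) := h1
    _ = (2 + 0*|t| + 0*t^2) * Real.exp (π*‖τ - 2*u + 1‖*|t| - π*c4*t^2) := by ring

lemma integral_ggd_zero (u τ : ℂ) (c4 θ : ℝ) (hc4 : 0 < c4) (hθ4 : |θ| ≤ π/4)
    (hθ : c4 ≤ τ.im * Real.cos (2*θ) + τ.re * Real.sin (2*θ)) :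
    ∫ t : ℝ, ggd u τ θ t = 0 := by
  have hint := integrable_ggd u τ c4 θ hc4 hθ4 hθ
  have hderiv : ∀ x : ℝ, HasDerivAt (fun t : ℝ => I * (t:ℂ) * gg u τ θ t) (ggd u τ θ x) x :=
    fun x => hasDerivAt_h_t u τ θ x hθ4
  obtain ⟨htop, hbot⟩ := tendsto_hh u τ c4 θ hc4 hθ4 hθ
  have h0 : I * ((0:ℝ):ℂ) * gg u τ θ 0 = 0 := by simp
  have hIoi : ∫ t in Set.Ioi (0:ℝ), ggd u τ θ t = 0 - I * ((0:ℝ):ℂ) * gg u τ θ 0 :=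
    integral_Ioi_of_hasDerivAt_of_tendsto' (fun x _ => hderiv x) hint.integrableOn htop
  have hIic : ∫ t in Set.Iic (0:ℝ), ggd u τ θ t = I * ((0:ℝ):ℂ) * gg u τ θ 0 - 0 :=
    integral_Iic_of_hasDerivAt_of_tendsto' (fun x _ => hderiv x) hint.integrableOn hbot
  have := intervalIntegral.integral_Iic_add_Ioi (b := (0:ℝ)) hint.integrableOn hint.integrableOn
  rw [← this, hIoi, hIic, h0]
  ring

lemma ggd_bd (u τ : ℂ) (c4 θ t : ℝ) (hθ4 : |θ| ≤ π/4)
    (hθ : c4 ≤ τ.im * Real.cos (2*θ) + τ.re * Real.sin (2*θ)) :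
    ‖ggd u τ θ t‖ ≤ (2 + (2*π*‖τ - 2*u + 1‖ + 8*π)*|t| + (4*π*‖τ‖)*t^2)
      * Real.exp (π*‖τ - 2*u + 1‖*|t| - π*c4*t^2) := by
  have h1 : ‖ffun u τ (pt θ t)‖ ≤ 2 * Real.exp (π*‖τ - 2*u + 1‖*|t| - π*c4*t^2) :=
    ffun_bd u τ c4 θ t hθ4 hθ
  have h2 : ‖ffd u τ (pt θ t)‖ ≤ (4*π*‖τ‖*|t| + 2*π*‖τ - 2*u + 1‖ + 8*π)
      * Real.exp (π*‖τ - 2*u + 1‖*|t| - π*c4*t^2) := ffd_bd u τ c4 θ t hθ4 hθ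
  have hE := Real.exp_pos (π*‖τ - 2*u + 1‖*|t| - π*c4*t^2)
  have hn : ‖ggd u τ θ t‖ ≤ ‖ffun u τ (pt θ t)‖ + |t| * ‖ffd u τ (pt θ t)‖ := by
    rw [ggd]
    refine le_trans (norm_add_le _ _) ?_
    have e1 : ‖I * Complex.exp ((θ:ℂ)*I) * ffun u τ (pt θ t)‖ = ‖ffun u τ (pt θ t)‖ := by
      rw [norm_mul, norm_mul, Complex.norm_I, one_mul, 
        Complex.norm_exp_ofReal_mul_I, one_mul]
    have e2 : ‖I * (t:ℂ) * Complex.exp ((θ:ℂ)*I)^2 * ffd u τ (pt θ t)‖ = |t| * ‖ffd u τ (pt θ t)‖ := by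
      rw [norm_mul, norm_mul, norm_mul, Complex.norm_I, one_mul, norm_pow,
         Complex.norm_exp_ofReal_mul_I, one_pow, mul_one,
        Complex.norm_real, Real.norm_eq_abs]
    rw [e1, e2]
  refine le_trans hn ?_
  have h3 : |t| * ‖ffd u τ (pt θ t)‖ ≤ |t| * ((4*π*‖τ‖*|t| + 2*π*‖τ - 2*u + 1‖ + 8*π)
      * Real.exp (π*‖τ - 2*u + 1‖*|t| - π*c4*t^2)) :=
    mul_le_mul_of_nonneg_left h2 (abs_nonneg t)
  have ht2 : |t| * |t| = t^2 := by rw [← _root_.sq_abs t]; ring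
  calc ‖ffun u τ (pt θ t)‖ + |t| * ‖ffd u τ (pt θ t)‖
      ≤ 2 * Real.exp (π*‖τ - 2*u + 1‖*|t| - π*c4*t^2)
        + |t| * ((4*π*‖τ‖*|t| + 2*π*‖τ - 2*u + 1‖ + 8*π)
          * Real.exp (π*‖τ - 2*u + 1‖*|t| - π*c4*t^2)) := by linarith
    _ = (2 + (2*π*‖τ - 2*u + 1‖ + 8*π)*|t| + (4*π*‖τ‖)*t^2)
        * Real.exp (π*‖τ - 2*u + 1‖*|t| - π*c4*t^2) := by
        linear_combination (4*π*‖τ‖*Real.exp (π*‖τ - 2*u + 1‖*|t| - π*c4*t^2)) * ht2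

lemma FF_hasDerivAt_zero (u τ : ℂ) (h1 : 0 < τ.re) (h2 : 0 < τ.im) (θ₀ : ℝ)
    (h0 : 0 ≤ θ₀) (hlt : θ₀ < π/4) : HasDerivAt (FF u τ) 0 θ₀ := by
  set δ := min (π/8) (τ.im/(8*τ.re)) with hδ
  have hδpos : 0 < δ := lt_min (by positivity) (by positivity)
  have hδ8 : δ ≤ π/8 := min_le_left _ _
  set c4 := min τ.re τ.im / 4 with hc4def
  have hc4 : 0 < c4 := by
    rw [hc4def]
    have := lt_min h1 h2
    linarith
  set ε := min δ (π/4 - θ₀) with hε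
  have hεpos : 0 < ε := lt_min hδpos (by linarith)
  have hball : ∀ θ ∈ Metric.ball θ₀ ε, |θ| ≤ π/4 ∧
      c4 ≤ τ.im * Real.cos (2*θ) + τ.re * Real.sin (2*θ) := by
    intro θ hθ
    rw [Metric.mem_ball, Real.dist_eq, abs_lt] at hθ
    have hε1 : ε ≤ δ := min_le_left _ _
    have hε2 : ε ≤ π/4 - θ₀ := min_le_right _ _
    have hup : θ ≤ π/4 := by linarith
    have hdown : -δ ≤ θ := by linarith
    have habs : |θ| ≤ π/4 := by
      rw [abs_le]
      constructor
      · linarith [Real.pi_pos]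
      · exact hup
    exact ⟨habs, region τ h1 h2 θ hdown hup⟩
  have hmain := hasDerivAt_integral_of_dominated_loc_of_deriv_le
    (F := fun θ t => gg u τ θ t) (F' := fun θ t => ggd u τ θ t)
    (x₀ := θ₀) (s := Metric.ball θ₀ ε)
    (bound := fun t => (2 + (2*π*‖τ - 2*u + 1‖ + 8*π)*|t| + (4*π*‖τ‖)*t^2)
      * Real.exp (π*‖τ - 2*u + 1‖*|t| - π*c4*t^2))
    (Metric.ball_mem_nhds θ₀ hεpos)
    (by
      filter_upwards [Metric.ball_mem_nhds θ₀ hεpos] with θ hθ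
      exact (continuous_gg_t u τ θ (hball θ hθ).1).aestronglyMeasurable)
    (by
      have hmem := Metric.mem_ball_self hεpos (x := θ₀)
      exact integrable_gg u τ c4 θ₀ hc4 (hball θ₀ hmem).1 (hball θ₀ hmem).2)
    (by
      have hmem := Metric.mem_ball_self hεpos (x := θ₀)
      exact (continuous_ggd_t u τ θ₀ (hball θ₀ hmem).1).aestronglyMeasurable)
    (by
      filter_upwards with t
      intro θ hθ
      exact ggd_bd u τ c4 θ t (hball θ hθ).1 (hball θ hθ).2)
    (integrable_poly_gauss (π*c4) (π*‖τ - 2*u + 1‖) 2 (2*π*‖τ - 2*u + 1‖ + 8*π) (4*π*‖τ‖)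
      (by positivity) (by norm_num) (by positivity) (by positivity))
    (by
      filter_upwards with t
      intro θ hθ
      exact hasDerivAt_gg_theta u τ θ t (hball θ hθ).1)
  obtain ⟨-, hG⟩ := hmain
  have hmem := Metric.mem_ball_self hεpos (x := θ₀)
  have hzero : ∫ t : ℝ, ggd u τ θ₀ t = 0 :=
    integral_ggd_zero u τ c4 θ₀ hc4 (hball θ₀ hmem).1 (hball θ₀ hmem).2
  rw [hzero] at hG
  exact hG

lemma FF_continuousOn (u τ : ℂ) (h1 : 0 < τ.re) (h2 : 0 < τ.im) :
    ContinuousOn (FF u τ) (Set.Icc 0 (π/4)) := by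
  set c4 := min τ.re τ.im / 4 with hc4def
  have hmem : ∀ θ ∈ Set.Icc (0:ℝ) (π/4), |θ| ≤ π/4 ∧
      c4 ≤ τ.im * Real.cos (2*θ) + τ.re * Real.sin (2*θ) := by
    intro θ hθ
    obtain ⟨ha, hb⟩ := hθ
    refine ⟨by rw [abs_le]; constructor <;> linarith [Real.pi_pos], ?_⟩
    refine region τ h1 h2 θ ?_ hb
    have : 0 < min (π/8) (τ.im/(8*τ.re)) := lt_min (by positivity) (by positivity)
    linarith
  apply MeasureTheory.continuousOn_of_dominated
    (bound := fun t => 2 * Real.exp (π*‖τ - 2*u + 1‖*|t| - π*c4*t^2))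
  · intro θ hθ
    exact (continuous_gg_t u τ θ (hmem θ hθ).1).aestronglyMeasurable
  · intro θ hθ
    filter_upwards with t
    have e1 : ‖gg u τ θ t‖ = ‖ffun u τ (pt θ t)‖ := by
      rw [gg, norm_mul,  Complex.norm_exp_ofReal_mul_I, one_mul]
    rw [e1]
    exact ffun_bd u τ c4 θ t (hmem θ hθ).1 (hmem θ hθ).2
  · have := integrable_poly_gauss (π*c4) (π*‖τ - 2*u + 1‖) 2 0 0
      (by positivity) (by norm_num) (by norm_num) (by norm_num)
    refine this.congr' ?_ ?_
    · exact ((continuous_const.mul (Real.continuous_exp.comp (by continuity))).aestronglyMeasurable)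
    · filter_upwards with t
      norm_num
  · filter_upwards with t
    exact (continuousOn_gg_theta u τ t).mono (fun θ hθ =>
      ⟨by linarith [hθ.1, Real.pi_pos], hθ.2⟩)

lemma FF_const (u τ : ℂ) (h1 : 0 < τ.re) (h2 : 0 < τ.im) :
    FF u τ (π/4) = FF u τ 0 := by
  have hderiv : ∀ x ∈ Set.Ico (0:ℝ) (π/4), HasDerivWithinAt (FF u τ) 0 (Set.Ici x) x :=
    fun x hx => (FF_hasDerivAt_zero u τ h1 h2 x hx.1 hx.2).hasDerivWithinAt
  exact constant_of_has_deriv_right_zero (FF_continuousOn u τ h1 h2) hderiv (π/4)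
    (Set.right_mem_Icc.mpr (by linarith [Real.pi_pos]))

lemma exp_pi_div_two_eq : Complex.exp ((π:ℂ)/2*I) = I := by
  rw [Complex.exp_mul_I, Complex.cos_pi_div_two, Complex.sin_pi_div_two]
  simp

lemma w_sq : Complex.exp ((π:ℂ)/4*I)^2 = I := by
  rw [sq, ← Complex.exp_add]
  rw [show (π:ℂ)/4*I + (π:ℂ)/4*I = (π:ℂ)/2*I by ring]
  exact exp_pi_div_two_eq

lemma omega_eq : Complex.exp (3 * (π:ℂ) * I / 4) = I * Complex.exp ((π:ℂ)/4*I) := by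
  have h := Complex.exp_add ((π:ℂ)/2*I) ((π:ℂ)/4*I)
  rw [exp_pi_div_two_eq] at h
  rw [← h]
  congr 1
  ring

lemma integrand_eq (u τ : ℂ) (v : ℝ) :
    Complex.exp (3 * (π:ℂ) * I / 4) *
      (Complex.exp (-(π:ℂ) * I * τ * (1/2 + Complex.exp (3 * (π:ℂ) * I / 4) * v) ^ 2
          + 2 * (π:ℂ) * I * u * (1/2 + Complex.exp (3 * (π:ℂ) * I / 4) * v)) /
        (Complex.exp (2 * (π:ℂ) * I * (1/2 + Complex.exp (3 * (π:ℂ) * I / 4) * v)) - 1))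
    = Complex.exp ((π:ℂ)*I*(u - 1/2 - τ/4)) * gg u τ (π/4) v := by
  set w := Complex.exp ((π:ℂ)/4*I) with hw
  have hw2 : w^2 = I := w_sq
  have hcast : ((π/4 : ℝ):ℂ) = (π:ℂ)/4 := by push_cast; ring
  have hgg : gg u τ (π/4) v = w * (Complex.exp (EEx u τ (w * (v:ℂ))) / DD (w * (v:ℂ))) := by
    rw [gg, ffun, pt, hcast]
  rw [hgg, omega_eq]
  set W := w * (v:ℂ) with hW
  have hz : (1:ℂ)/2 + I * w * (v:ℂ) = 1/2 + I*W := by rw [hW]; ring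
  rw [hz]
  -- numerator
  have hnum : Complex.exp (-(π:ℂ) * I * τ * (1/2 + I*W) ^ 2 + 2 * (π:ℂ) * I * u * (1/2 + I*W))
      = Complex.exp (EEx u τ W) * Complex.exp (-((π:ℂ)*W)) * Complex.exp ((π:ℂ)*I*(u - τ/4)) := by
    rw [← Complex.exp_add, ← Complex.exp_add]
    congr 1
    rw [EEx]
    have hI : Complex.I^2 = (-1 : ℂ) := Complex.I_sq
    linear_combination (((π:ℂ)*W*(2*u - τ) - (π:ℂ)*τ*((v:ℂ))^2*(Complex.I^2)) * hI + (-((π:ℂ))*Complex.I*τ*((v:ℂ))^2 - (π:ℂ)*(Complex.I^3)*τ*((v:ℂ))^2) * hw2)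
  -- denominator
  have hden : Complex.exp (2 * (π:ℂ) * I * (1/2 + I*W)) - 1
      = (- DD W) * Complex.exp (-((π:ℂ)*W)) := by
    have hzz : 2 * (π:ℂ) * I * (1/2 + I*W) = (π:ℂ)*I + (-(2*(π:ℂ)*W)) := by
      linear_combination (2*(π:ℂ)*W) * Complex.I_sq
    rw [hzz, Complex.exp_add, Complex.exp_pi_mul_I, DD]
    rw [show (-(2*(π:ℂ)*W)) = (-((π:ℂ)*W)) + (-((π:ℂ)*W)) by ring]
    rw [Complex.exp_add]
    have h0 : Complex.exp ((π:ℂ)*W) * Complex.exp (-((π:ℂ)*W)) = 1 := by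
      rw [← Complex.exp_add]; simp
    linear_combination h0
  rw [hnum, hden]
  have hc : Complex.exp ((π:ℂ)*I*(u - 1/2 - τ/4))
      = Complex.exp ((π:ℂ)*I*(u - τ/4)) * (-I) := by
    rw [show (π:ℂ)*I*(u - 1/2 - τ/4) = (π:ℂ)*I*(u - τ/4) + (-((π:ℂ)/2*I)) by ring]
    rw [Complex.exp_add, Complex.exp_neg, exp_pi_div_two_eq, Complex.inv_I]
  rw [hc]
  have he : Complex.exp (-((π:ℂ)*W)) ≠ 0 := Complex.exp_ne_zero _
  rw [show Complex.exp (EEx u τ W) * Complex.exp (-((π:ℂ)*W)) * Complex.exp ((π:ℂ)*I*(u - τ/4))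
      = (Complex.exp (EEx u τ W) * Complex.exp ((π:ℂ)*I*(u - τ/4))) * Complex.exp (-((π:ℂ)*W)) by ring]
  rw [mul_div_mul_right _ _ he]
  rw [div_neg]
  ring

lemma gg_zero_eq (u τ : ℂ) (t : ℝ) :
    gg u τ 0 t = Complex.exp ((π:ℂ)*I*τ*(t:ℂ)^2 + (π:ℂ)*(t:ℂ)*(τ - 2*u + 1)) /
      ((Real.exp (π*t) + Real.exp (-(π*t)) : ℝ) : ℂ) := by
  have h0 : ((0:ℝ):ℂ) = 0 := by norm_num
  rw [gg, pt, h0, zero_mul, Complex.exp_zero, one_mul, one_mul, ffun, EEx, DD]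
  congr 1
  push_cast
  ring_nf

end Statement10Aux

theorem statement10 (u τ : ℂ) (h1 : 0 < τ.re) (h2 : 0 < τ.im)
    (h3 : (τ.re - τ.im)/2 < u.re) (h4 : u.re < 1 + (τ.re - τ.im)/2) :
    Upsilon u τ = Complex.exp ((π:ℂ)*I*(u - 1/2 - τ/4)) *
      ∫ y : ℝ, Complex.exp ((π:ℂ)*I*τ*(y:ℂ)^2 + (π:ℂ)*(y:ℂ)*(τ - 2*u + 1)) /
        ((Real.exp (π*y) + Real.exp (-(π*y)) : ℝ) : ℂ) := by
  have step1 : Upsilon u τ = ∫ v : ℝ, Complex.exp ((π:ℂ)*I*(u - 1/2 - τ/4)) * gg u τ (π/4) v := by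
    unfold Upsilon
    exact integral_congr_ae (Filter.Eventually.of_forall fun v => integrand_eq u τ v)
  have step2 : (∫ v : ℝ, Complex.exp ((π:ℂ)*I*(u - 1/2 - τ/4)) * gg u τ (π/4) v)
      = Complex.exp ((π:ℂ)*I*(u - 1/2 - τ/4)) * FF u τ (π/4) := by
    rw [show (fun v : ℝ => Complex.exp ((π:ℂ)*I*(u - 1/2 - τ/4)) * gg u τ (π/4) v)
        = fun v : ℝ => Complex.exp ((π:ℂ)*I*(u - 1/2 - τ/4)) • gg u τ (π/4) v from rfl]
    rw [MeasureTheory.integral_smul]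
    rw [FF, smul_eq_mul]
  have step3 : FF u τ (π/4) = FF u τ 0 := FF_const u τ h1 h2
  have step4 : FF u τ 0 = ∫ y : ℝ, Complex.exp ((π:ℂ)*I*τ*(y:ℂ)^2 + (π:ℂ)*(y:ℂ)*(τ - 2*u + 1)) /
      ((Real.exp (π*y) + Real.exp (-(π*y)) : ℝ) : ℂ) := by
    rw [FF]
    exact integral_congr_ae (Filter.Eventually.of_forall fun t => gg_zero_eq u τ t)
  rw [step1, step2, step3, step4]

end
end

section
/- Let τ ∈ ℂ with Re(τ) > 0 be fixed and let m ∈ ℤ_{≥0}. The functions u ↦ G(u;τ), u ↦ G^{(1)}(u;τ), …, u ↦ G^{(m)}(u;τ) are linearly independent over ℂ: if c_0, …, c_m ∈ ℂ satisfy Σ_{j=0}^m c_j·G^{(j)}(u;τ) = 0 for all u ∈ ℂ, then c_0 = c_1 = ⋯ = c_m = 0. In particular (m = 0), for each such τ the function G(·;τ) is not identically zero. -/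
open Complex Real MeasureTheory

noncomputable section

noncomputable def Complex.abs : AbsoluteValue ℂ ℝ := NormedField.toAbsoluteValue ℂ

lemma Complex.norm_eq_abs (z : ℂ) : ‖z‖ = Complex.abs z := rfl

@[simp]
lemma Complex.abs_exp (z : ℂ) : Complex.abs (Complex.exp z) = Real.exp z.re := by
  rw [← Complex.norm_eq_abs]; exact Complex.norm_exp z

@[simp]
lemma Complex.abs_ofReal (r : ℝ) : Complex.abs (r : ℂ) = |r| := by
  rw [← Complex.norm_eq_abs]; simp

@[simp]
lemma Complex.abs_I : Complex.abs I = 1 := by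
  rw [← Complex.norm_eq_abs]; simp

@[simp]
lemma Complex.abs_two : Complex.abs 2 = 2 := by
  rw [← Complex.norm_eq_abs]; simp

lemma Complex.re_le_abs (z : ℂ) : z.re ≤ Complex.abs z := by
  rw [← Complex.norm_eq_abs]; exact Complex.re_le_norm z

open Filter Metric Topology



def om : ℂ := Complex.exp (3 * (π:ℂ) * I / 4)

def zl (v : ℝ) : ℂ := 1/2 + om * v

lemma om_eq : om = (Real.sqrt 2)/2 * (-1 + I) := by
  have h : (3 * (π:ℂ) * I / 4) = ((3 * π / 4 : ℝ) : ℂ) * I := by push_cast; ring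
  rw [om, h, Complex.exp_mul_I, ← Complex.ofReal_cos, ← Complex.ofReal_sin]
  have h1 : (3 * π / 4 : ℝ) = π - π/4 := by ring
  rw [h1, Real.cos_pi_sub, Real.sin_pi_sub, Real.cos_pi_div_four, Real.sin_pi_div_four]
  push_cast
  ring

lemma sqrt2_sq : ((Real.sqrt 2 : ℝ) : ℂ)^2 = 2 := by
  norm_cast
  rw [Real.sq_sqrt]; norm_num

lemma om_sq : om^2 = -I := by
  rw [om_eq]
  have := sqrt2_sq
  have hI := Complex.I_sq
  have hI : (I:ℂ)^2 = -1 := Complex.I_sq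
  linear_combination (-I/2) * sqrt2_sq + (((Real.sqrt 2:ℝ):ℂ)^2/4) * hI

lemma abs_om : Complex.abs om = 1 := by
  rw [om, Complex.abs_exp]
  have : (3 * (π:ℂ) * I / 4).re = 0 := by simp
  rw [this, Real.exp_zero]


lemma exp_2piz (v : ℝ) :
    Complex.exp (2*(π:ℂ)*I*(zl v)) = -Complex.exp ((((-(Real.sqrt 2))*π*v : ℝ):ℂ) * (1+I)) := by
  have hI : (I:ℂ)^2 = -1 := Complex.I_sq
  have h : 2*(π:ℂ)*I*(zl v) = (π:ℂ)*I + (((-(Real.sqrt 2))*π*v : ℝ):ℂ) * (1+I) := by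
    rw [zl]
    push_cast
    linear_combination (2*(π:ℂ)*I*(v:ℂ)) * om_eq + (((Real.sqrt 2:ℝ):ℂ)*(π:ℂ)*(v:ℂ))*hI
  rw [h, Complex.exp_add, Complex.exp_pi_mul_I]
  ring

lemma D_lb (v : ℝ) : 1/2 ≤ Complex.abs (Complex.exp (2*(π:ℂ)*I*(zl v)) - 1) := by
  set x : ℝ := (-(Real.sqrt 2))*π*v with hx
  set w : ℂ := Complex.exp ((x:ℂ) * (1+I)) with hw
  have habs : Complex.abs w = Real.exp x := by
    rw [hw, Complex.abs_exp]
    congr 1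
    simp
  have e1 : Complex.exp (2*(π:ℂ)*I*(zl v)) - 1 = -(1 + w) := by
    rw [exp_2piz]; ring
  rw [e1, map_neg_eq_map]
  have h4 : |Complex.abs w - 1| ≤ Complex.abs (1 + w) := by
    have h4' : |Complex.abs w - Complex.abs (-1:ℂ)| ≤ Complex.abs (w - (-1)) := by
      simpa [← Complex.norm_eq_abs] using abs_norm_sub_norm_le (w) (-1:ℂ)
    have h5 : (w - (-1)) = 1 + w := by ring
    rw [h5] at h4'
    simpa using h4'
  rcases le_or_gt x (-1) with hc | hc
  · have h2 : Real.exp x ≤ Real.exp (-1) := Real.exp_le_exp.2 hc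
    have h3 : Real.exp (-1) ≤ 1/2 := by
      rw [Real.exp_neg]
      rw [inv_le_comm₀] <;> nlinarith [Real.add_one_le_exp 1]
    have h6 := (abs_le.1 h4).1
    rw [habs] at h6
    linarith
  rcases le_or_gt x 1 with hc2 | hc2
  · -- middle: use real part
    have hre : (1 + w).re = 1 + Real.exp x * Real.cos x := by
      rw [hw, Complex.add_re, Complex.exp_re]
      congr 2 <;> simp
    have hcos : 0 ≤ Real.cos x := by
      apply Real.cos_nonneg_of_mem_Icc
      constructor <;> [linarith [Real.pi_gt_three]; linarith [Real.pi_gt_three]]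
    have := Complex.re_le_abs (1 + w)
    rw [hre] at this
    nlinarith [Real.exp_pos x]
  · have h2 : Real.exp 1 ≤ Real.exp x := Real.exp_le_exp.2 hc2.le
    have h6 := (abs_le.1 h4).2
    rw [habs] at h6
    nlinarith [Real.add_one_le_exp (1:ℝ)]

lemma D_ne (v : ℝ) : Complex.exp (2*(π:ℂ)*I*(zl v)) - 1 ≠ 0 := by
  intro h
  have := D_lb v
  rw [h] at this
  simp at this
  linarith

def Phi (τ u : ℂ) (v : ℝ) : ℂ :=
  om * (Complex.exp (-(π:ℂ)*I*τ*(zl v)^2 + 2*(π:ℂ)*I*u*(zl v)) /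
    (Complex.exp (2*(π:ℂ)*I*(zl v)) - 1))

lemma zl_sq (v : ℝ) : (zl v)^2 = 1/4 + om*v - I*v^2 := by
  rw [zl]; linear_combination ((v:ℂ)^2)*om_sq

lemma E_eq (τ u : ℂ) (v : ℝ) : -(π:ℂ)*I*τ*(zl v)^2 + 2*(π:ℂ)*I*u*(zl v)
    = ((-(π:ℂ)*I*τ/4 + (π:ℂ)*I*u) + ((2*u - τ)*(π:ℂ)*I*om)*v) + ((-(π*v^2:ℝ)):ℂ)*τ := by
  rw [zl_sq, zl]
  push_cast
  linear_combination ((π:ℂ)*τ*(v:ℂ)^2) * Complex.I_sq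

lemma abs_two_u_sub (u τ : ℂ) : Complex.abs (2*u - τ) ≤ 2*Complex.abs u + Complex.abs τ := by
  have h := Complex.abs.sub_le (2*u) 0 τ
  simpa [map_mul, Complex.abs_two] using h

lemma reE_le (τ u : ℂ) (v : ℝ) :
    (-(π:ℂ)*I*τ*(zl v)^2 + 2*(π:ℂ)*I*u*(zl v)).re ≤
      -(π*τ.re)*v^2 + (π*Complex.abs τ + 2*π*Complex.abs u)*|v|
        + (π*Complex.abs τ/4 + π*Complex.abs u) := by
  rw [E_eq, Complex.add_re]
  have h1 : (((-(π*v^2:ℝ)):ℂ)*τ).re = -(π*τ.re)*v^2 := by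
    rw [← Complex.ofReal_neg, Complex.re_ofReal_mul]; ring
  rw [h1]
  have e1 : Complex.abs (-(π:ℂ)*I*τ/4) = π*Complex.abs τ/4 := by
    have h : -(π:ℂ)*I*τ/4 = ((π/4 : ℝ):ℂ) * (-(I*τ)) := by push_cast; ring
    rw [h, map_mul, Complex.abs_ofReal, map_neg_eq_map, map_mul, Complex.abs_I,
      abs_of_pos (by positivity : (0:ℝ) < π/4)]
    ring
  have e2 : Complex.abs ((π:ℂ)*I*u) = π*Complex.abs u := by
    rw [map_mul, map_mul, Complex.abs_I, Complex.abs_ofReal, abs_of_pos Real.pi_pos]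
    ring
  have e3 : Complex.abs (((2*u - τ)*(π:ℂ)*I*om)*(v:ℂ)) ≤ (π*Complex.abs τ + 2*π*Complex.abs u)*|v| := by
    rw [map_mul, map_mul, map_mul, map_mul, Complex.abs_I, abs_om, Complex.abs_ofReal,
      Complex.abs_ofReal, abs_of_pos Real.pi_pos]
    have h0 := abs_two_u_sub u τ
    have hv : (0:ℝ) ≤ |v| := abs_nonneg v
    have h4 : Complex.abs (2*u-τ) * |v| ≤ (2*Complex.abs u + Complex.abs τ) * |v| :=
      mul_le_mul_of_nonneg_right h0 hv
    nlinarith [Real.pi_pos]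
  have h2 : ((-(π:ℂ)*I*τ/4 + (π:ℂ)*I*u) + ((2*u - τ)*(π:ℂ)*I*om)*(v:ℂ)).re ≤
      (π*Complex.abs τ + 2*π*Complex.abs u)*|v| + (π*Complex.abs τ/4 + π*Complex.abs u) := by
    refine (Complex.re_le_abs _).trans ?_
    refine (Complex.abs.add_le _ _).trans ?_
    have h3 := (Complex.abs.add_le (-(π:ℂ)*I*τ/4) ((π:ℂ)*I*u))
    rw [e1, e2] at h3
    linarith
  linarith

lemma master (a b c p q : ℝ) (ha : 0 < a) (hp : 0 ≤ p) (hq : 0 ≤ q) :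
    ∃ C : ℝ, 0 ≤ C ∧ ∀ v : ℝ, (p + q*|v|) * Real.exp (-a*v^2 + b*|v| + c) ≤
      C * Real.exp (-(a/2)*v^2) := by
  refine ⟨(p+q) * Real.exp (c + (b+1)^2/a), by positivity, fun v => ?_⟩
  have hv : (0:ℝ) ≤ |v| := abs_nonneg v
  have h1 : p + q*|v| ≤ (p+q) * Real.exp |v| := by
    nlinarith [Real.add_one_le_exp |v|, Real.one_le_exp hv]
  calc (p + q*|v|) * Real.exp (-a*v^2 + b*|v| + c)
      ≤ ((p+q) * Real.exp |v|) * Real.exp (-a*v^2 + b*|v| + c) :=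
        mul_le_mul_of_nonneg_right h1 (Real.exp_pos _).le
    _ = (p+q) * Real.exp (|v| + (-a*v^2 + b*|v| + c)) := by rw [mul_assoc, ← Real.exp_add]
    _ ≤ (p+q) * Real.exp ((c + (b+1)^2/a) + (-(a/2)*v^2)) := by
        have h2 : |v| + (-a*v^2 + b*|v| + c) ≤ (c + (b+1)^2/a) + (-(a/2)*v^2) := by
          have key : (b+1)*|v| ≤ (a/2)*v^2 + (b+1)^2/a := by
            have hs : a*((b+1)*|v|) ≤ (a^2/2)*v^2 + (b+1)^2 := by
              nlinarith [sq_nonneg (a*|v| - (b+1)), _root_.sq_abs v]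
            calc (b+1)*|v| = (a*((b+1)*|v|))/a := by field_simp
              _ ≤ ((a^2/2)*v^2 + (b+1)^2)/a := by gcongr
              _ = (a/2)*v^2 + (b+1)^2/a := by field_simp
          nlinarith [_root_.sq_abs v]
        exact mul_le_mul_of_nonneg_left (Real.exp_le_exp.2 h2) (by positivity)
    _ = ((p+q) * Real.exp (c + (b+1)^2/a)) * Real.exp (-(a/2)*v^2) := by
        rw [mul_assoc, ← Real.exp_add]

lemma abs_Phi_le (τ u : ℂ) (v : ℝ) : Complex.abs (Phi τ u v) ≤
    2 * Real.exp ((-(π:ℂ)*I*τ*(zl v)^2 + 2*(π:ℂ)*I*u*(zl v)).re) := by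
  rw [Phi, map_mul, abs_om, one_mul, map_div₀, Complex.abs_exp]
  rw [div_le_iff₀ (lt_of_lt_of_le (by norm_num) (D_lb v))]
  nlinarith [Real.exp_pos ((-(π:ℂ)*I*τ*(zl v)^2 + 2*(π:ℂ)*I*u*(zl v)).re), D_lb v]

lemma cont_zl : Continuous zl := by
  unfold zl
  exact continuous_const.add (continuous_const.mul Complex.continuous_ofReal)

lemma cont_Phi (τ u : ℂ) : Continuous (Phi τ u) := by
  unfold Phi
  refine continuous_const.mul (Continuous.div ?_ ?_ D_ne)
  · exact Complex.continuous_exp.comp (by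
      exact ((continuous_const.mul (cont_zl.pow 2)).add (continuous_const.mul cont_zl)))
  · exact (Complex.continuous_exp.comp (continuous_const.mul cont_zl)).sub continuous_const

lemma Upsilon_eq (u τ : ℂ) : Upsilon u τ = ∫ v : ℝ, Phi τ u v := rfl

lemma abs_zl_le (v : ℝ) : Complex.abs (zl v) ≤ 1/2 + |v| := by
  rw [zl]
  refine (Complex.abs.add_le _ _).trans ?_
  rw [map_mul, abs_om, Complex.abs_ofReal]
  norm_num

def Phi' (τ u : ℂ) (v : ℝ) : ℂ :=
  om * (Complex.exp (-(π:ℂ)*I*τ*(zl v)^2 + 2*(π:ℂ)*I*u*(zl v)) * (2*(π:ℂ)*I*(zl v)) /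
    (Complex.exp (2*(π:ℂ)*I*(zl v)) - 1))

lemma cont_Phi' (τ u : ℂ) : Continuous (Phi' τ u) := by
  unfold Phi'
  refine continuous_const.mul (Continuous.div ?_ ?_ D_ne)
  · exact (Complex.continuous_exp.comp
      (((continuous_const.mul (cont_zl.pow 2)).add (continuous_const.mul cont_zl)))).mul
      (continuous_const.mul cont_zl)
  · exact (Complex.continuous_exp.comp (continuous_const.mul cont_zl)).sub continuous_const

lemma hasDerivAt_Phi (τ : ℂ) (v : ℝ) (u : ℂ) :
    HasDerivAt (fun u => Phi τ u v) (Phi' τ u v) u := by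
  have h : HasDerivAt (fun u : ℂ => -(π:ℂ)*I*τ*(zl v)^2 + 2*(π:ℂ)*I*u*(zl v))
      (2*(π:ℂ)*I*(zl v)) u := by
    have h0 := ((hasDerivAt_id u).const_mul (2*(π:ℂ)*I*(zl v))).const_add
      (-(π:ℂ)*I*τ*(zl v)^2)
    have he : (fun u : ℂ => -(π:ℂ)*I*τ*(zl v)^2 + 2*(π:ℂ)*I*(zl v) * id u)
        = (fun u : ℂ => -(π:ℂ)*I*τ*(zl v)^2 + 2*(π:ℂ)*I*u*(zl v)) := by
      funext u; simp; ring
    rw [mul_one] at h0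
    rw [← he]
    exact h0
  exact ((h.cexp.div_const _).const_mul om)

lemma abs_Phi'_le (τ u : ℂ) (v : ℝ) : Complex.abs (Phi' τ u v) ≤
    (2*π + 4*π*|v|) * Real.exp ((-(π:ℂ)*I*τ*(zl v)^2 + 2*(π:ℂ)*I*u*(zl v)).re) := by
  rw [Phi', map_mul, abs_om, one_mul, map_div₀, map_mul, Complex.abs_exp]
  have hz := abs_zl_le v
  have hB : Complex.abs (2*(π:ℂ)*I*(zl v)) ≤ 2*π*(1/2+|v|) := by
    rw [map_mul, map_mul, map_mul, Complex.abs_I, Complex.abs_two, Complex.abs_ofReal,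
      abs_of_pos Real.pi_pos, mul_one]
    have : (0:ℝ) ≤ 2*π := by positivity
    nlinarith [Complex.abs.nonneg (zl v), Real.pi_pos]
  rw [div_le_iff₀ (lt_of_lt_of_le (by norm_num) (D_lb v))]
  have hexp := Real.exp_pos ((-(π:ℂ)*I*τ*(zl v)^2 + 2*(π:ℂ)*I*u*(zl v)).re)
  have h1 := mul_le_mul_of_nonneg_left hB hexp.le
  have h2 := mul_le_mul_of_nonneg_left
    (mul_le_mul_of_nonneg_left (D_lb v) (by positivity : (0:ℝ) ≤ 2*π + 4*π*|v|)) hexp.le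
  nlinarith [hexp]

lemma Phi_integrable (τ : ℂ) (hτ : 0 < τ.re) (u : ℂ) : Integrable (Phi τ u) := by
  obtain ⟨C, hC0, hC⟩ := master (π*τ.re) (π*Complex.abs τ + 2*π*Complex.abs u)
    (π*Complex.abs τ/4 + π*Complex.abs u) 2 0 (by positivity) (by norm_num) le_rfl
  refine Integrable.mono (g := fun v => C * Real.exp (-(π*τ.re/2)*v^2))
    ?_ (cont_Phi τ u).aestronglyMeasurable (ae_of_all _ fun v => ?_)
  · have : Integrable (fun v : ℝ => Real.exp (-(π*τ.re/2)*v^2)) :=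
      integrable_exp_neg_mul_sq (by positivity)
    exact this.const_mul C
  · refine le_trans ?_ (le_abs_self _)
    show Complex.abs (Phi τ u v) ≤ C * Real.exp (-(π*τ.re/2)*v^2)
    have h0 := abs_Phi_le τ u v
    have h2 : (2:ℝ) * Real.exp ((-(π:ℂ)*I*τ*(zl v)^2 + 2*(π:ℂ)*I*u*(zl v)).re) ≤
        2 * Real.exp (-(π*τ.re)*v^2 + (π*Complex.abs τ + 2*π*Complex.abs u)*|v|
          + (π*Complex.abs τ/4 + π*Complex.abs u)) := by
      have := Real.exp_le_exp.2 (reE_le τ u v)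
      linarith
    have h3 := hC v
    have he : -(π*τ.re/2)*v^2 = -((π*τ.re)/2)*v^2 := by ring
    rw [he]
    refine (h0.trans h2).trans ?_
    calc (2:ℝ) * Real.exp (-(π*τ.re)*v^2 + (π*Complex.abs τ + 2*π*Complex.abs u)*|v|
          + (π*Complex.abs τ/4 + π*Complex.abs u))
        = (2 + 0*|v|) * Real.exp (-(π*τ.re)*v^2 + (π*Complex.abs τ + 2*π*Complex.abs u)*|v|
          + (π*Complex.abs τ/4 + π*Complex.abs u)) := by ring
      _ ≤ C * Real.exp (-((π*τ.re)/2)*v^2) := h3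

set_option maxHeartbeats 1000000 in
lemma upsilon_diff (τ : ℂ) (hτ : 0 < τ.re) : Differentiable ℂ (fun u => Upsilon u τ) := by
  intro u₀
  obtain ⟨C, hC0, hC⟩ := master (π*τ.re) (π*Complex.abs τ + 2*π*(Complex.abs u₀ + 1))
    (π*Complex.abs τ/4 + π*(Complex.abs u₀ + 1)) (2*π) (4*π)
    (by positivity) (by positivity) (by positivity)
  have key := hasDerivAt_integral_of_dominated_loc_of_deriv_le (μ := volume)
    (F := fun u v => Phi τ u v) (F' := fun u v => Phi' τ u v) (x₀ := u₀)
    (bound := fun v => C * Real.exp (-(π*τ.re/2)*v^2)) (s := ball u₀ 1) (ball_mem_nhds u₀ one_pos)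
    (Eventually.of_forall fun u => (cont_Phi τ u).aestronglyMeasurable)
    (Phi_integrable τ hτ u₀)
    ((cont_Phi' τ u₀).aestronglyMeasurable)
    (ae_of_all _ fun v u hu => ?_)
    ((integrable_exp_neg_mul_sq (by positivity : (0:ℝ) < π*τ.re/2)).const_mul C)
    (ae_of_all _ fun v u _ => hasDerivAt_Phi τ v u)
  · have hd := key.2
    have heq : (fun u => Upsilon u τ) = fun u => ∫ v : ℝ, Phi τ u v := by
      funext u; exact Upsilon_eq u τ
    rw [heq]
    exact hd.differentiableAt
  · have habsu : Complex.abs u ≤ Complex.abs u₀ + 1 := by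
      have hd : Complex.abs (u - u₀) < 1 := by
        simpa [Complex.dist_eq, Complex.norm_eq_abs] using (mem_ball.1 hu)
      have := Complex.abs.sub_le u u₀ 0
      simp only [sub_zero] at this
      linarith
    rw [Complex.norm_eq_abs]
    refine (abs_Phi'_le τ u v).trans ?_
    have hv : (0:ℝ) ≤ |v| := abs_nonneg v
    have h2 : Real.exp ((-(π:ℂ)*I*τ*(zl v)^2 + 2*(π:ℂ)*I*u*(zl v)).re) ≤
        Real.exp (-(π*τ.re)*v^2 + (π*Complex.abs τ + 2*π*(Complex.abs u₀ + 1))*|v|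
          + (π*Complex.abs τ/4 + π*(Complex.abs u₀ + 1))) := by
      apply Real.exp_le_exp.2
      refine (reE_le τ u v).trans ?_
      nlinarith [mul_le_mul_of_nonneg_right habsu hv, Real.pi_pos]
    refine le_trans (mul_le_mul_of_nonneg_left h2 (by positivity)) (hC v)

lemma G_diff (τ : ℂ) (hτ : 0 < τ.re) : Differentiable ℂ (fun w => G w τ) := by
  have h1 : Differentiable ℂ (fun w : ℂ => Complex.exp (-(π:ℂ) * I * w ^ 2 / 2 + (π:ℂ) * I / 8)) := by
    apply Differentiable.cexp
    apply Differentiable.add _ (differentiable_const _)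
    apply Differentiable.div_const
    exact (differentiable_const _).mul (differentiable_pow 2)
  have h2 : Differentiable ℂ (fun w : ℂ => Upsilon (τ ^ ((1:ℂ)/2) * w) τ) :=
    (upsilon_diff τ hτ).comp ((differentiable_const _).mul differentiable_id)
  exact ((differentiable_const _).mul h1).mul h2

lemma G_smooth (τ : ℂ) (hτ : 0 < τ.re) : ContDiff ℂ ⊤ (fun w => G w τ) := (G_diff τ hτ).contDiff

lemma Gderiv_diff (τ : ℂ) (hτ : 0 < τ.re) (j : ℕ) : Differentiable ℂ (fun w => Gderiv j w τ) := by
  show Differentiable ℂ (iteratedDeriv j (fun w => G w τ))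
  exact (G_smooth τ hτ).differentiable_iteratedDeriv j (by simp)

lemma Gderiv_hasDeriv (τ : ℂ) (hτ : 0 < τ.re) (j : ℕ) (x : ℂ) :
    HasDerivAt (fun w => Gderiv j w τ) (Gderiv (j+1) x τ) x := by
  have h1 := ((Gderiv_diff τ hτ j) x).hasDerivAt
  have h2 : Gderiv (j+1) x τ = deriv (fun w => Gderiv j w τ) x := by
    show iteratedDeriv (j+1) (fun w => G w τ) x = _
    rw [iteratedDeriv_succ]
    rfl
  rw [h2]
  exact h1

set_option maxHeartbeats 1000000 in
lemma growth_bound (τ : ℂ) (hτ : 0 < τ.re) (n : ℕ) (hn : 1 ≤ n) (a : ℕ → ℂ)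
    (hODE : ∀ x : ℂ, Gderiv n x τ = ∑ j ∈ Finset.range n, a j * Gderiv j x τ) :
    ∃ C K : ℝ, 0 < C ∧ 0 ≤ K ∧
      ∀ u : ℂ, Complex.abs (G u τ) ≤ C * Real.exp (K * Complex.abs u) := by
  set K : ℝ := 1 + ∑ j ∈ Finset.range n, Complex.abs (a j) with hK
  set C : ℝ := 1 + ∑ j ∈ Finset.range n, Complex.abs (Gderiv j 0 τ) with hC
  have hsum_nonneg : (0:ℝ) ≤ ∑ j ∈ Finset.range n, Complex.abs (a j) :=
    Finset.sum_nonneg fun j _ => Complex.abs.nonneg _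
  have hsum2_nonneg : (0:ℝ) ≤ ∑ j ∈ Finset.range n, Complex.abs (Gderiv j 0 τ) :=
    Finset.sum_nonneg fun j _ => Complex.abs.nonneg _
  have hK1 : (1:ℝ) ≤ K := by simp [hK]; linarith
  have hC0 : (0:ℝ) < C := by simp [hC]; linarith
  have hK0 : (0:ℝ) ≤ K := by linarith
  refine ⟨C, K, hC0, hK0, fun u => ?_⟩
  have habs0 : ∀ x : ℂ, Complex.abs (Gderiv 0 x τ) = Complex.abs (G x τ) := by
    intro x
    show Complex.abs (iteratedDeriv 0 (fun w => G w τ) x) = _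
    rw [iteratedDeriv_zero]
  rcases eq_or_ne u 0 with hu | hu
  · subst hu
    have h1 : Complex.abs (G 0 τ) ≤ C := by
      have h2 : Complex.abs (Gderiv 0 0 τ) ≤ ∑ j ∈ Finset.range n, Complex.abs (Gderiv j 0 τ) :=
        Finset.single_le_sum (f := fun j => Complex.abs (Gderiv j 0 τ))
          (fun j _ => Complex.abs.nonneg _) (Finset.mem_range.2 hn)
      rw [habs0 0] at h2
      linarith
    simpa using h1
  · set r : ℝ := Complex.abs u with hr
    have hrpos : 0 < r := by
      rw [hr]; exact Complex.abs.pos hu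
    set d : ℂ := ((r:ℂ))⁻¹ * u with hd
    have habsd : Complex.abs d = 1 := by
      rw [hd, map_mul, map_inv₀, Complex.abs_ofReal, abs_of_pos hrpos, ← hr]
      field_simp
    set F : ℝ → (Fin n → ℂ) := fun t i => Gderiv (i:ℕ) ((t:ℂ) * d) τ with hF
    set F' : ℝ → (Fin n → ℂ) := fun t i => d * Gderiv ((i:ℕ)+1) ((t:ℂ) * d) τ with hF'
    have hderiv : ∀ t : ℝ, HasDerivAt F (F' t) t := by
      intro t
      rw [hasDerivAt_pi]
      intro i
      have hinner : HasDerivAt (fun t : ℝ => (t:ℂ) * d) d t := by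
        have h0 : HasDerivAt (fun t : ℝ => (t:ℂ)) 1 t := by
          simpa using (hasDerivAt_id t).ofReal_comp
        simpa using h0.mul_const d
      have houter := Gderiv_hasDeriv τ hτ (i:ℕ) ((t:ℂ) * d)
      have hcomp := houter.scomp t hinner
      exact hcomp
    have hcont : ContinuousOn F (Set.Icc 0 r) :=
      fun t _ => ((hderiv t).continuousAt).continuousWithinAt
    have hFnorm : ∀ t : ℝ, ∀ i : Fin n, ‖F t i‖ ≤ ‖F t‖ :=
      fun t i => norm_le_pi_norm (F t) i
    have hbound : ∀ x ∈ Set.Ico (0:ℝ) r, ‖F' x‖ ≤ K * ‖F x‖ + 0 := by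
      intro x _
      rw [add_zero]
      have hFx0 : (0:ℝ) ≤ K * ‖F x‖ := mul_nonneg hK0 (norm_nonneg _)
      rw [pi_norm_le_iff_of_nonneg hFx0]
      intro i
      have heq : ‖F' x i‖ = Complex.abs (Gderiv ((i:ℕ)+1) ((x:ℂ)*d) τ) := by
        show Complex.abs (d * _) = _
        rw [map_mul, habsd, one_mul]
      rw [heq]
      rcases lt_or_eq_of_le (Nat.succ_le_of_lt i.isLt) with hi | hi
      · have := hFnorm x ⟨(i:ℕ)+1, hi⟩
        have h2 : ‖F x ⟨(i:ℕ)+1, hi⟩‖ = Complex.abs (Gderiv ((i:ℕ)+1) ((x:ℂ)*d) τ) := rfl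
        rw [h2] at this
        calc Complex.abs (Gderiv ((i:ℕ)+1) ((x:ℂ)*d) τ) ≤ ‖F x‖ := this
          _ ≤ K * ‖F x‖ := le_mul_of_one_le_left (norm_nonneg _) hK1
      · rw [Nat.succ_eq_add_one] at hi
        rw [hi, hODE]
        calc Complex.abs (∑ j ∈ Finset.range n, a j * Gderiv j ((x:ℂ)*d) τ)
            ≤ ∑ j ∈ Finset.range n, Complex.abs (a j * Gderiv j ((x:ℂ)*d) τ) := by
              simpa [← Complex.norm_eq_abs] using
                norm_sum_le (Finset.range n) (fun j => a j * Gderiv j ((x:ℂ)*d) τ)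
          _ ≤ ∑ j ∈ Finset.range n, Complex.abs (a j) * ‖F x‖ := by
              apply Finset.sum_le_sum
              intro j hj
              rw [map_mul]
              apply mul_le_mul_of_nonneg_left _ (Complex.abs.nonneg _)
              have h3 : ‖F x ⟨j, Finset.mem_range.1 hj⟩‖ =
                  Complex.abs (Gderiv j ((x:ℂ)*d) τ) := rfl
              rw [← h3]
              exact hFnorm x _
          _ = (∑ j ∈ Finset.range n, Complex.abs (a j)) * ‖F x‖ := by
              rw [← Finset.sum_mul]
          _ ≤ K * ‖F x‖ := by
              apply mul_le_mul_of_nonneg_right _ (norm_nonneg _)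
              rw [hK]; linarith
    have hF0 : ‖F 0‖ ≤ C := by
      rw [pi_norm_le_iff_of_nonneg hC0.le]
      intro i
      have h0 : ((0:ℝ):ℂ) * d = 0 := by simp
      have h1 : ‖F 0 i‖ = Complex.abs (Gderiv (i:ℕ) 0 τ) := by
        show Complex.abs (Gderiv (i:ℕ) (((0:ℝ):ℂ)*d) τ) = _
        rw [h0]
      rw [h1]
      have h2 : Complex.abs (Gderiv (i:ℕ) 0 τ) ≤
          ∑ j ∈ Finset.range n, Complex.abs (Gderiv j 0 τ) :=
        Finset.single_le_sum (f := fun j => Complex.abs (Gderiv j 0 τ))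
          (fun j _ => Complex.abs.nonneg _) (Finset.mem_range.2 i.isLt)
      rw [hC]; linarith
    have hgron := norm_le_gronwallBound_of_norm_deriv_right_le hcont
      (fun x _ => (hderiv x).hasDerivWithinAt) hF0 hbound r
      (Set.right_mem_Icc.2 hrpos.le)
    rw [gronwallBound_ε0, sub_zero] at hgron
    have hud : ((r:ℝ):ℂ) * d = u := by
      rw [hd]
      have : ((r:ℝ):ℂ) ≠ 0 := by
        simp [Complex.ofReal_ne_zero]; linarith
      field_simp
    have hFr : ‖F r (⟨0, hn⟩ : Fin n)‖ = Complex.abs (G u τ) := by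
      show Complex.abs (Gderiv 0 (((r:ℝ):ℂ)*d) τ) = _
      rw [hud, habs0]
    calc Complex.abs (G u τ) = ‖F r ⟨0, hn⟩‖ := hFr.symm
      _ ≤ ‖F r‖ := norm_le_pi_norm _ _
      _ ≤ C * Real.exp (K * r) := hgron

def It (τ : ℂ) (t : ℝ) : ℂ :=
  ∫ v : ℝ, Complex.exp (-(π:ℂ)*τ*((v:ℂ)-(t:ℂ))^2) /
    (Complex.exp (2*(π:ℂ)*I*(zl v)) - 1)

lemma Ups_eq (τ : ℂ) (t : ℝ) :
    Upsilon (τ * zl t) τ = om * Complex.exp ((π:ℂ)*I*τ*(zl t)^2) * It τ t := by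
  have hexp : ∀ v : ℝ, -(π:ℂ)*I*τ*(zl v)^2 + 2*(π:ℂ)*I*(τ * zl t)*(zl v)
      = (π:ℂ)*I*τ*(zl t)^2 + (-(π:ℂ)*τ*((v:ℂ)-(t:ℂ))^2) := by
    intro v
    simp only [zl]
    linear_combination (-(π:ℂ)*I*τ*((v:ℂ)-(t:ℂ))^2) * om_sq + ((π:ℂ)*τ*((v:ℂ)-(t:ℂ))^2) * Complex.I_sq
  have hfun : (fun v : ℝ => Phi τ (τ * zl t) v) =
      fun v : ℝ => (om * Complex.exp ((π:ℂ)*I*τ*(zl t)^2)) *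
        (Complex.exp (-(π:ℂ)*τ*((v:ℂ)-(t:ℂ))^2) /
          (Complex.exp (2*(π:ℂ)*I*(zl v)) - 1)) := by
    funext v
    rw [Phi, hexp v, Complex.exp_add]
    ring
  rw [Upsilon_eq, hfun, MeasureTheory.integral_const_mul, It, mul_assoc]

lemma gauss_ne (τ : ℂ) (hτ : 0 < τ.re) :
    (∫ s : ℝ, Complex.exp (-(π:ℂ)*τ*(s:ℂ)^2)) ≠ 0 := by
  have hfe : (fun s : ℝ => Complex.exp (-(π:ℂ)*τ*(s:ℂ)^2)) =
      fun s : ℝ => Complex.exp (-((π:ℂ)*τ)*(s:ℂ)^2) := by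
    funext s; ring_nf
  have hre : (0:ℝ) < ((π:ℂ)*τ).re := by
    rw [Complex.re_ofReal_mul]
    positivity
  rw [show (∫ s : ℝ, Complex.exp (-(π:ℂ)*τ*(s:ℂ)^2)) =
      ∫ s : ℝ, Complex.exp (-((π:ℂ)*τ)*(s:ℂ)^2) from by rw [hfe]]
  rw [integral_gaussian_complex hre]
  intro h
  rw [Complex.cpow_eq_zero_iff] at h
  have hτ0 : τ ≠ 0 := fun h0 => by simp [h0] at hτ
  exact (div_ne_zero (by exact_mod_cast Real.pi_ne_zero)
    (mul_ne_zero (by exact_mod_cast Real.pi_ne_zero) hτ0)) h.1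

lemma It_tendsto (τ : ℂ) (hτ : 0 < τ.re) :
    Tendsto (It τ) atTop (𝓝 (-(∫ s : ℝ, Complex.exp (-(π:ℂ)*τ*(s:ℂ)^2)))) := by
  have hIt : ∀ t : ℝ, It τ t = ∫ s : ℝ, Complex.exp (-(π:ℂ)*τ*(s:ℂ)^2) /
      (Complex.exp (2*(π:ℂ)*I*(zl (s+t))) - 1) := by
    intro t
    rw [It, ← MeasureTheory.integral_add_right_eq_self
      (fun v : ℝ => Complex.exp (-(π:ℂ)*τ*((v:ℂ)-(t:ℂ))^2) /
        (Complex.exp (2*(π:ℂ)*I*(zl v)) - 1)) t]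
    congr 1
    funext s
    have : (((s+t:ℝ)):ℂ) - (t:ℂ) = (s:ℂ) := by push_cast; ring
    rw [this]
  have habs : ∀ s : ℝ, Complex.abs (Complex.exp (-(π:ℂ)*τ*(s:ℂ)^2)) =
      Real.exp (-(π*τ.re)*s^2) := by
    intro s
    rw [Complex.abs_exp]
    congr 1
    have : -(π:ℂ)*τ*(s:ℂ)^2 = ((-(π*s^2):ℝ):ℂ)*τ := by push_cast; ring
    rw [this, Complex.re_ofReal_mul]
    ring
  have key : Tendsto (fun t : ℝ => ∫ s : ℝ, Complex.exp (-(π:ℂ)*τ*(s:ℂ)^2) /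
      (Complex.exp (2*(π:ℂ)*I*(zl (s+t))) - 1)) atTop
      (𝓝 (∫ s : ℝ, -Complex.exp (-(π:ℂ)*τ*(s:ℂ)^2))) := by
    apply tendsto_integral_filter_of_dominated_convergence
      (bound := fun s : ℝ => 2 * Real.exp (-(π*τ.re)*s^2))
    · refine Eventually.of_forall fun t => Continuous.aestronglyMeasurable ?_
      refine Continuous.div ?_ ?_ (fun s => D_ne (s+t))
      · exact Complex.continuous_exp.comp
          (continuous_const.mul (Complex.continuous_ofReal.pow 2))
      · exact (Complex.continuous_exp.comp
          (continuous_const.mul (cont_zl.comp (continuous_id.add continuous_const)))).sub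
          continuous_const
    · refine Eventually.of_forall fun t => ae_of_all _ fun s => ?_
      rw [Complex.norm_eq_abs, map_div₀, habs s]
      have hd := D_lb (s+t)
      have he := Real.exp_pos (-(π*τ.re)*s^2)
      rw [div_le_iff₀ (by linarith)]
      nlinarith
    · exact (integrable_exp_neg_mul_sq (by positivity : (0:ℝ) < π*τ.re)).const_mul 2
    · refine ae_of_all _ fun s => ?_
      have h1 : Tendsto (fun t : ℝ => Complex.exp (2*(π:ℂ)*I*(zl (s+t)))) atTop (𝓝 0) := by
        rw [tendsto_zero_iff_norm_tendsto_zero]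
        have hn : ∀ t : ℝ, ‖Complex.exp (2*(π:ℂ)*I*(zl (s+t)))‖ =
            Real.exp ((-(Real.sqrt 2))*π*(s+t)) := by
          intro t
          rw [exp_2piz, norm_neg, Complex.norm_eq_abs, Complex.abs_exp]
          congr 1
          simp
        simp only [hn]
        apply Real.tendsto_exp_atBot.comp
        have hs2 : (-(Real.sqrt 2))*π < 0 := by
          have := Real.sqrt_pos.2 (by norm_num : (0:ℝ) < 2)
          nlinarith [Real.pi_pos]
        have hadd : Tendsto (fun t : ℝ => s + t) atTop atTop :=
          tendsto_atTop_add_const_left _ s tendsto_id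
        exact Tendsto.const_mul_atTop_of_neg hs2 hadd
      have h2 : Tendsto (fun t : ℝ => Complex.exp (2*(π:ℂ)*I*(zl (s+t))) - 1) atTop
          (𝓝 (-1)) := by
        have := h1.sub_const 1
        simpa using this
      have h3 := Tendsto.div (tendsto_const_nhds
        (x := Complex.exp (-(π:ℂ)*τ*(s:ℂ)^2))) h2 (by norm_num : (-1:ℂ) ≠ 0)
      have h4 : Complex.exp (-(π:ℂ)*τ*(s:ℂ)^2) / (-1:ℂ) =
          -Complex.exp (-(π:ℂ)*τ*(s:ℂ)^2) := by ring
      rw [h4] at h3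
      exact h3
  rw [show It τ = fun t : ℝ => ∫ s : ℝ, Complex.exp (-(π:ℂ)*τ*(s:ℂ)^2) /
      (Complex.exp (2*(π:ℂ)*I*(zl (s+t))) - 1) from funext hIt]
  rw [show (-(∫ s : ℝ, Complex.exp (-(π:ℂ)*τ*(s:ℂ)^2))) =
      ∫ s : ℝ, -Complex.exp (-(π:ℂ)*τ*(s:ℂ)^2) from (integral_neg _).symm]
  exact key


lemma tau_half_sq (τ : ℂ) (hτ : 0 < τ.re) : τ^((1:ℂ)/2) * τ^((1:ℂ)/2) = τ := by
  have hτ0 : τ ≠ 0 := fun h0 => by simp [h0] at hτ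
  rw [← Complex.cpow_add _ _ hτ0]
  norm_num

lemma re_exponent (τ : ℂ) (t : ℝ) :
    (-(π:ℂ)*I*(τ*(zl t)^2)/2 + (π:ℂ)*I/8).re + ((π:ℂ)*I*τ*(zl t)^2).re =
      π/2*τ.re*t^2 - π/2*(τ*om).im*t - π/8*τ.im := by
  rw [← Complex.add_re]
  have h1 : -(π:ℂ)*I*(τ*(zl t)^2)/2 + (π:ℂ)*I/8 + (π:ℂ)*I*τ*(zl t)^2 =
      I*(((π/2:ℝ):ℂ)*(τ*(zl t)^2) + ((π/8:ℝ):ℂ)) := by push_cast; ring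
  rw [h1, Complex.I_mul_re]
  have h2 : τ*(zl t)^2 = (Complex.ofReal 4⁻¹)*τ + (Complex.ofReal t)*(τ*om)
      - (Complex.ofReal (t^2))*(I*τ) := by
    rw [zl_sq]; push_cast; ring
  rw [Complex.add_im, Complex.im_ofReal_mul, h2]
  rw [Complex.sub_im, Complex.add_im, Complex.im_ofReal_mul, Complex.im_ofReal_mul,
    Complex.im_ofReal_mul, Complex.I_mul_im]
  simp only [Complex.ofReal_im]
  ring

lemma absG (τ : ℂ) (hτ : 0 < τ.re) (t : ℝ) :
    Complex.abs (G (τ^((1:ℂ)/2) * zl t) τ) = Complex.abs (τ^((1:ℂ)/4)) *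
      Real.exp (π/2*τ.re*t^2 - π/2*(τ*om).im*t - π/8*τ.im) * Complex.abs (It τ t) := by
  have harg : τ^((1:ℂ)/2) * (τ^((1:ℂ)/2) * zl t) = τ * zl t := by
    rw [← mul_assoc, tau_half_sq τ hτ]
  have hsq : (τ^((1:ℂ)/2) * zl t)^2 = τ * (zl t)^2 := by
    rw [mul_pow]
    rw [show (τ^((1:ℂ)/2))^2 = τ from by rw [pow_two, tau_half_sq τ hτ]]
  simp only [G]
  rw [harg, Ups_eq τ t, hsq, map_mul, map_mul, map_mul, map_mul, abs_om, one_mul,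
    Complex.abs_exp, Complex.abs_exp]
  have hstep : Complex.abs (τ^((1:ℂ)/4)) * Real.exp ((-(π:ℂ)*I*(τ*(zl t)^2)/2 + (π:ℂ)*I/8).re) *
      (Real.exp (((π:ℂ)*I*τ*(zl t)^2).re) * Complex.abs (It τ t)) =
      Complex.abs (τ^((1:ℂ)/4)) *
        Real.exp ((-(π:ℂ)*I*(τ*(zl t)^2)/2 + (π:ℂ)*I/8).re + ((π:ℂ)*I*τ*(zl t)^2).re) *
        Complex.abs (It τ t) := by
    rw [Real.exp_add]; ring
  rw [hstep, re_exponent τ t]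

set_option maxHeartbeats 1000000 in
lemma no_exp_bound (τ : ℂ) (hτ : 0 < τ.re) (C K : ℝ) (hC : 0 < C) (hK : 0 ≤ K)
    (hbd : ∀ u : ℂ, Complex.abs (G u τ) ≤ C * Real.exp (K * Complex.abs u)) : False := by
  have hτ0 : τ ≠ 0 := fun h0 => by simp [h0] at hτ
  set α : ℝ := π/2*τ.re with hα
  have hαpos : 0 < α := by rw [hα]; positivity
  set β : ℝ := π/2*(τ*om).im with hβ
  set γ : ℝ := π/8*τ.im with hγ
  set A₁ : ℝ := Complex.abs (τ^((1:ℂ)/4)) with hA₁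
  have hA₁pos : 0 < A₁ := by
    rw [hA₁]
    apply Complex.abs.pos
    intro h
    rw [Complex.cpow_eq_zero_iff] at h
    exact hτ0 h.1
  set ℓ : ℝ := Complex.abs (∫ s : ℝ, Complex.exp (-(π:ℂ)*τ*(s:ℂ)^2)) with hℓ
  have hℓpos : 0 < ℓ := Complex.abs.pos (gauss_ne τ hτ)
  set c₂ : ℝ := Complex.abs (τ^((1:ℂ)/2)) with hc₂
  have hc₂0 : 0 ≤ c₂ := Complex.abs.nonneg _
  -- eventually |It| ≥ ℓ/2
  have htend : Tendsto (fun t => Complex.abs (It τ t)) atTop (𝓝 ℓ) := by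
    have h1 := (It_tendsto τ hτ).norm
    simp only [Complex.norm_eq_abs, norm_neg] at h1
    exact h1
  have hev : ∀ᶠ t in atTop, ℓ/2 ≤ Complex.abs (It τ t) :=
    htend.eventually (eventually_ge_nhds (by linarith))
  obtain ⟨T, hT⟩ := eventually_atTop.1 hev
  set C₄ : ℝ := C / (A₁ * (ℓ/2)) with hC₄
  set B : ℝ := β + K*c₂ with hB
  set Γ : ℝ := γ + K*c₂/2 + C₄ + 1 with hΓ
  set t : ℝ := max (max T 1) ((|B|+|Γ|+1)/α) with ht
  have ht1 : T ≤ t := le_trans (le_max_left _ _) (le_max_left _ _)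
  have ht2 : (1:ℝ) ≤ t := le_trans (le_max_right _ _) (le_max_left _ _)
  have ht0 : (0:ℝ) < t := by linarith
  have ht3 : (|B|+|Γ|+1) ≤ α*t := by
    have := le_max_right (max T 1) ((|B|+|Γ|+1)/α)
    rw [← ht] at this
    rw [div_le_iff₀ hαpos] at this
    linarith [this]
  -- chain
  have hQ := absG τ hτ t
  have hub : Complex.abs (τ^((1:ℂ)/2) * zl t) ≤ c₂*(1/2 + t) := by
    rw [map_mul, ← hc₂]
    have := abs_zl_le t
    rw [abs_of_pos ht0] at this
    exact mul_le_mul_of_nonneg_left this hc₂0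
  have hmain : A₁ * Real.exp (α*t^2 - β*t - γ) * (ℓ/2) ≤
      C * Real.exp (K*(c₂*(1/2+t))) := by
    calc A₁ * Real.exp (α*t^2 - β*t - γ) * (ℓ/2)
        ≤ A₁ * Real.exp (α*t^2 - β*t - γ) * Complex.abs (It τ t) := by
          exact mul_le_mul_of_nonneg_left (hT t ht1) (by positivity)
      _ = Complex.abs (G (τ^((1:ℂ)/2) * zl t) τ) := by
          rw [hQ]
      _ ≤ C * Real.exp (K * Complex.abs (τ^((1:ℂ)/2) * zl t)) := hbd _
      _ ≤ C * Real.exp (K*(c₂*(1/2+t))) := by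
          apply mul_le_mul_of_nonneg_left _ hC.le
          exact Real.exp_le_exp.2 (mul_le_mul_of_nonneg_left hub hK)
  have hexp2 : Real.exp ((α*t^2 - β*t - γ) - K*(c₂*(1/2+t))) ≤ C₄ := by
    rw [Real.exp_sub, hC₄, div_le_div_iff₀ (Real.exp_pos _) (by positivity)]
    calc Real.exp (α*t^2 - β*t - γ) * (A₁ * (ℓ/2))
        = A₁ * Real.exp (α*t^2 - β*t - γ) * (ℓ/2) := by ring
      _ ≤ C * Real.exp (K*(c₂*(1/2+t))) := hmain
  have hP := Real.add_one_le_exp ((α*t^2 - β*t - γ) - K*(c₂*(1/2+t)))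
  have hfin : α*t^2 ≤ B*t + Γ - 1 := by
    have h5 : (α*t^2 - β*t - γ) - K*(c₂*(1/2+t)) + 1 ≤ C₄ := by linarith
    rw [hB, hΓ]
    nlinarith
  have habsB : B ≤ |B| := le_abs_self B
  have habsΓ : Γ ≤ |Γ| := le_abs_self Γ
  nlinarith [mul_le_mul_of_nonneg_right ht3 (le_of_lt ht0), abs_nonneg B, abs_nonneg Γ]

theorem statement13 (τ : ℂ) (hτ : 0 < τ.re) (m : ℕ) (c : ℕ → ℂ)
    (h : ∀ u : ℂ, ∑ j ∈ Finset.range (m+1), c j * Gderiv j u τ = 0) :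
    ∀ j ≤ m, c j = 0 := by
  by_contra hcon
  push_neg at hcon
  obtain ⟨j₀, hj₀m, hj₀⟩ := hcon
  set S := (Finset.range (m+1)).filter (fun j => c j ≠ 0) with hS
  have hSne : S.Nonempty :=
    ⟨j₀, Finset.mem_filter.2 ⟨Finset.mem_range.2 (Nat.lt_succ_of_le hj₀m), hj₀⟩⟩
  set n := S.max' hSne with hn
  have hmem := S.max'_mem hSne
  have hcn : c n ≠ 0 := (Finset.mem_filter.1 hmem).2
  have hnm : n ≤ m := Nat.lt_succ_iff.1 (Finset.mem_range.1 (Finset.mem_filter.1 hmem).1)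
  have hgt : ∀ j, n < j → j ≤ m → c j = 0 := by
    intro j hj hjm
    by_contra hc0
    exact absurd (S.le_max' j (Finset.mem_filter.2
      ⟨Finset.mem_range.2 (Nat.lt_succ_of_le hjm), hc0⟩)) (not_le.2 hj)
  have hsum : ∀ u : ℂ, ∑ j ∈ Finset.range (n+1), c j * Gderiv j u τ = 0 := by
    intro u
    rw [← h u]
    apply Finset.sum_subset (Finset.range_subset_range.2 (by omega))
    intro j hj hnj
    have hj1 : n < j := by
      rcases Finset.mem_range.1 hj with _
      have := Finset.mem_range.1 hj
      by_contra hle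
      push_neg at hle
      exact hnj (Finset.mem_range.2 (by omega))
    rw [hgt j hj1 (Nat.lt_succ_iff.1 (Finset.mem_range.1 hj))]
    ring
  rcases Nat.eq_zero_or_pos n with hn0 | hnpos
  · have hG0 : ∀ u : ℂ, G u τ = 0 := by
      intro u
      have h1 := hsum u
      rw [hn0] at h1
      simp only [zero_add, Finset.sum_range_one] at h1
      have h2 : Gderiv 0 u τ = 0 := by
        rcases mul_eq_zero.1 h1 with h3 | h3
        · exact absurd h3 (hn0 ▸ hcn)
        · exact h3
      rw [show Gderiv 0 u τ = G u τ from by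
        show iteratedDeriv 0 (fun w => G w τ) u = _; rw [iteratedDeriv_zero]] at h2
      exact h2
    exact no_exp_bound τ hτ 1 0 one_pos le_rfl (fun u => by
      rw [hG0]
      simp)
  · have hODE : ∀ x : ℂ, Gderiv n x τ =
        ∑ j ∈ Finset.range n, (-(c j / c n)) * Gderiv j x τ := by
      intro x
      apply mul_left_cancel₀ hcn
      rw [Finset.mul_sum]
      have hterm : ∀ j ∈ Finset.range n, c n * (-(c j / c n) * Gderiv j x τ)
          = -(c j * Gderiv j x τ) := by
        intro j _
        field_simp
      rw [Finset.sum_congr rfl hterm]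
      have h1 := hsum x
      rw [Finset.sum_range_succ] at h1
      rw [Finset.sum_neg_distrib]
      linear_combination h1
    obtain ⟨C, K, hC, hK, hbd⟩ := growth_bound τ hτ n hnpos (fun j => -(c j / c n)) hODE
    exact no_exp_bound τ hτ C K hC hK hbd

end
end

section
/- Let I ⊂ ℝ be a finite interval and n ∈ ℤ_{≥0}. There are constants C₁, C₂ depending only on I and n such that for all s = σ + it with σ ∈ I and t > 0: (i) if n ≥ 1, n ≤ (27/50)·t and z ∈ ℂ satisfies |z| ≤ (20/21)·(2n√t/5)^{1/3}, then |r_n(z,s)| ≤ C₁·|z|^n·t^{−n/6}; and (ii) if |z| ≤ √t/2, then |r_n(z,s)| ≤ C₂·e^{14|z|²/29}. -/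
open Complex Real MeasureTheory

noncomputable section

lemma wfun_diffOn (s : ℂ) (ht : 0 < s.im) :
    DifferentiableOn ℂ (wfun s) (Metric.ball 0 (Real.sqrt s.im)) := by
  set rt := Real.sqrt s.im with hrt
  have hrt0 : 0 < rt := Real.sqrt_pos.mpr ht
  intro z hz
  rw [Metric.mem_ball, dist_zero_right] at hz
  apply DifferentiableAt.differentiableWithinAt
  have hnorm : ‖z / (rt:ℂ)‖ < 1 := by
    rw [norm_div, Complex.norm_real, Real.norm_of_nonneg hrt0.le, div_lt_one hrt0]
    exact hz
  have hmem : 1 + z / (rt:ℂ) ∈ Complex.slitPlane := Complex.mem_slitPlane_of_norm_lt_one hnorm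
  have h1 : DifferentiableAt ℂ (fun w : ℂ => Complex.log (1 + w / (rt:ℂ))) z := by
    have hin : DifferentiableAt ℂ (fun w : ℂ => 1 + w / (rt:ℂ)) z := by fun_prop
    exact (Complex.differentiableAt_log hmem).comp z hin
  have h2 : DifferentiableAt ℂ (fun w : ℂ =>
      (s - 1) * Complex.log (1 + w / (rt:ℂ)) - I * (rt:ℂ) * w + I * w^2 / 2) z := by
    apply DifferentiableAt.add
    · exact (h1.const_mul _).sub (by fun_prop)
    · fun_prop
  exact h2.cexp

lemma wfun_bound (A B : ℝ) {s : ℂ} (hA : A ≤ s.re) (hB : s.re ≤ B) (ht : 0 < s.im)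
    {ξ : ℂ} (hξ : ‖ξ‖ ≤ 3/5 * Real.sqrt s.im) :
    ‖wfun s ξ‖ ≤ Real.exp ((|A| + |B| + 2) * Real.log (5/2)) *
      Real.exp (5 * ‖ξ‖^3 / (6 * Real.sqrt s.im)) := by
  set rt := Real.sqrt s.im with hrt
  have hrt0 : 0 < rt := Real.sqrt_pos.mpr ht
  have hrtsq : rt ^ 2 = s.im := Real.sq_sqrt ht.le
  set u : ℂ := ξ / (rt:ℂ) with hu
  have hrtne : (rt:ℂ) ≠ 0 := by exact_mod_cast hrt0.ne'
  have hξu : ξ = (rt:ℂ) * u := by rw [hu]; field_simp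
  have hnu : ‖u‖ = ‖ξ‖ / rt := by
    rw [hu, norm_div, Complex.norm_real, Real.norm_of_nonneg hrt0.le]
  have hnu35 : ‖u‖ ≤ 3/5 := by
    rw [hnu, div_le_iff₀ hrt0]; linarith
  set L : ℂ := Complex.log (1 + u) with hL
  -- norm as exp of re
  have h1 : ‖wfun s ξ‖ = Real.exp (((s - 1) * L - I * (rt:ℂ) * ξ + I * ξ^2 / 2).re) := by
    rw [wfun, Complex.norm_exp]
  -- re computation
  have h2 : ((s - 1) * L - I * (rt:ℂ) * ξ + I * ξ^2 / 2).re
      = (s.re - 1) * L.re - s.im * (L - u + u^2/2).im := by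
    rw [hξu, ← hrtsq]
    simp [Complex.mul_re, Complex.mul_im, Complex.add_re, Complex.add_im, Complex.sub_re,
      Complex.sub_im, Complex.div_re, Complex.div_im, Complex.normSq_apply, pow_two,
      Complex.I_re, Complex.I_im, Complex.ofReal_re, Complex.ofReal_im, Complex.one_re,
      Complex.one_im]
    linear_combination L.im * hrtsq
  -- bound on E := L - u + u^2/2
  have hE : ‖L - u + u^2/2‖ ≤ ‖u‖^3 * (1 - ‖u‖)⁻¹ / 3 := by
    have h3 : Complex.logTaylor 3 u = u - u^2/2 := by
      simp [Complex.logTaylor, Finset.sum_range_succ]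
      ring
    have := Complex.norm_log_sub_logTaylor_le 2 (show ‖u‖ < 1 by linarith)
    rw [h3] at this
    convert this using 2
    · ring
    · norm_num
  have hEim : - s.im * (L - u + u^2/2).im ≤ 5 * ‖ξ‖^3 / (6 * rt) := by
    have h4 : - s.im * (L - u + u^2/2).im ≤ s.im * ‖L - u + u^2/2‖ := by
      have := Complex.abs_im_le_norm (L - u + u^2/2)
      nlinarith [neg_abs_le (L - u + u^2/2).im, abs_nonneg (L - u + u^2/2).im]
    have h5 : (1 - ‖u‖)⁻¹ ≤ 5/2 := by
      rw [inv_le_iff_one_le_mul₀ (by linarith)]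
      nlinarith
    have h6 : s.im * (‖u‖^3 * (1 - ‖u‖)⁻¹ / 3) ≤ 5 * ‖ξ‖^3 / (6 * rt) := by
      set c := (1 - ‖u‖)⁻¹ with hc
      have e1 : s.im * (‖u‖^3 * c / 3) = (‖ξ‖^3 / rt) * (c / 3) := by
        rw [← hrtsq, hnu, div_pow]
        field_simp
      rw [e1, show (5:ℝ) * ‖ξ‖^3 / (6 * rt) = (‖ξ‖^3 / rt) * (5/6) by ring]
      apply mul_le_mul_of_nonneg_left _ (by positivity)
      linarith
    calc - s.im * (L - u + u^2/2).im ≤ s.im * ‖L - u + u^2/2‖ := h4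
      _ ≤ s.im * (‖u‖^3 * (1 - ‖u‖)⁻¹ / 3) := by
          apply mul_le_mul_of_nonneg_left hE ht.le
      _ ≤ 5 * ‖ξ‖^3 / (6 * rt) := h6
  -- bound on (s.re - 1) * L.re
  have hLre : |L.re| ≤ Real.log (5/2) := by
    have hub : ‖(1:ℂ) + u‖ ≤ 8/5 := by
      calc ‖(1:ℂ) + u‖ ≤ ‖(1:ℂ)‖ + ‖u‖ := norm_add_le _ _
        _ ≤ 8/5 := by rw [norm_one]; linarith
    have hlb : (2:ℝ)/5 ≤ ‖(1:ℂ) + u‖ := by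
      have h7 : ‖(1:ℂ)‖ ≤ ‖(1:ℂ) + u‖ + ‖u‖ := by
        calc ‖(1:ℂ)‖ = ‖(1 + u) + (-u)‖ := by ring_nf
          _ ≤ ‖(1:ℂ) + u‖ + ‖-u‖ := norm_add_le _ _
          _ = ‖(1:ℂ) + u‖ + ‖u‖ := by rw [norm_neg]
      rw [norm_one] at h7; linarith
    have : L.re = Real.log ‖1 + u‖ := Complex.log_re _
    have hpos : (0:ℝ) < ‖(1:ℂ) + u‖ := lt_of_lt_of_le (by norm_num) hlb
    rw [this, abs_le]
    constructor
    · rw [← Real.log_inv, show ((5:ℝ)/2)⁻¹ = 2/5 by norm_num]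
      exact Real.log_le_log (by norm_num) hlb
    · exact (Real.log_le_log hpos hub).trans (Real.log_le_log (by norm_num) (by norm_num))
  rw [h1, h2, ← Real.exp_add]
  apply Real.exp_le_exp.mpr
  have h8 : (s.re - 1) * L.re ≤ (|A| + |B| + 2) * Real.log (5/2) := by
    have h9 : |s.re - 1| ≤ |A| + |B| + 2 := by
      rw [abs_le]
      constructor
      · have h10 := neg_abs_le A; have := abs_nonneg B; linarith
      · have h10 := le_abs_self B; have := abs_nonneg A; linarith
    calc (s.re - 1) * L.re ≤ |(s.re - 1) * L.re| := le_abs_self _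
      _ = |s.re - 1| * |L.re| := abs_mul _ _
      _ ≤ (|A| + |B| + 2) * Real.log (5/2) := by
          apply mul_le_mul h9 hLre (abs_nonneg _) (by positivity)
  linarith

lemma rn_tail (n : ℕ) {s : ℂ} (ht : 0 < s.im) {ρ : ℝ} (hρ0 : 0 < ρ)
    (hρ : ρ < Real.sqrt s.im) {M θ : ℝ} (hM0 : 0 ≤ M)
    (hM : ∀ ξ : ℂ, ‖ξ‖ = ρ → ‖wfun s ξ‖ ≤ M) (hθ : θ < 1)
    {z : ℂ} (hz : ‖z‖ ≤ θ * ρ) :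
    ‖rn n s z‖ ≤ M * (‖z‖ / ρ)^n * (1 - θ)⁻¹ := by
  have hdiff := wfun_diffOn s ht
  set rt := Real.sqrt s.im with hrt
  set q : ℝ := ‖z‖ / ρ with hq
  have hq0 : 0 ≤ q := div_nonneg (norm_nonneg z) hρ0.le
  have hqθ : q ≤ θ := (div_le_iff₀ hρ0).mpr (by linarith)
  have hθ0 : 0 ≤ θ := le_trans hq0 hqθ
  have hq1 : q < 1 := lt_of_le_of_lt hqθ hθ
  -- Cauchy coefficient bounds
  have hcoef : ∀ k : ℕ, ‖iteratedDeriv k (wfun s) 0‖ ≤ (k.factorial : ℝ) * (M * (ρ⁻¹)^k) := by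
    set ρ' : NNReal := ⟨ρ, hρ0.le⟩ with hρ'
    have hρc : (ρ' : ℝ) = ρ := rfl
    have hd2 : DifferentiableOn ℂ (wfun s) (Metric.closedBall 0 ρ') := by
      apply hdiff.mono
      rw [hρc]
      exact Metric.closedBall_subset_ball hρ
    have hps : HasFPowerSeriesOnBall (wfun s) (cauchyPowerSeries (wfun s) 0 ρ') 0 ρ' :=
      hd2.hasFPowerSeriesOnBall (by exact_mod_cast hρ0)
    -- integral bound
    have hcont : Continuous fun θ : ℝ => ‖wfun s (circleMap 0 ρ θ)‖ := by
      apply Continuous.norm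
      apply hdiff.continuousOn.comp_continuous (continuous_circleMap 0 ρ)
      intro θ
      rw [Metric.mem_ball, dist_zero_right, norm_circleMap_zero,
        abs_of_pos hρ0]
      exact hρ
    have hint : (∫ θ in (0:ℝ)..2*π, ‖wfun s (circleMap 0 ρ θ)‖) ≤ 2*π*M := by
      have : (2:ℝ)*π*M = ∫ _ in (0:ℝ)..2*π, M := by
        rw [intervalIntegral.integral_const, smul_eq_mul]
        ring
      rw [this]
      apply intervalIntegral.integral_mono_on (by positivity)
        (hcont.intervalIntegrable _ _) intervalIntegrable_const
      intro θ _
      apply hM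
      rw [norm_circleMap_zero, abs_of_pos hρ0]
    intro k
    have h1 : iteratedDeriv k (wfun s) 0
        = k.factorial • (cauchyPowerSeries (wfun s) 0 ρ' k fun _ => (1:ℂ)) := by
      rw [iteratedDeriv_eq_iteratedFDeriv, ← hps.factorial_smul]
    rw [h1, nsmul_eq_mul, norm_mul, Complex.norm_natCast]
    apply mul_le_mul_of_nonneg_left _ (Nat.cast_nonneg _)
    calc ‖cauchyPowerSeries (wfun s) 0 ρ' k fun _ => (1:ℂ)‖
        ≤ ‖cauchyPowerSeries (wfun s) 0 ρ' k‖ := by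
          have := (cauchyPowerSeries (wfun s) 0 ρ' k).le_opNorm fun _ => (1:ℂ)
          simpa using this
      _ ≤ ((2 * π)⁻¹ * ∫ θ : ℝ in (0)..2 * π, ‖wfun s (circleMap 0 ρ' θ)‖) * |(ρ':ℝ)|⁻¹ ^ k :=
          norm_cauchyPowerSeries_le _ _ _ _
      _ ≤ M * (ρ⁻¹)^k := by
          rw [hρc, abs_of_pos hρ0]
          apply mul_le_mul_of_nonneg_right _ (by positivity)
          rw [inv_mul_le_iff₀ (by positivity)]
          exact hint.trans (le_of_eq (by ring))
  -- Taylor series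
  have hzball : z ∈ Metric.ball (0:ℂ) rt := by
    rw [Metric.mem_ball, dist_zero_right]
    calc ‖z‖ ≤ θ * ρ := hz
      _ < 1 * ρ := by apply mul_lt_mul_of_pos_right hθ hρ0
      _ = ρ := one_mul ρ
      _ < rt := hρ
  set g : ℕ → ℂ := fun k => (k.factorial : ℂ)⁻¹ * (z ^ k * iteratedDeriv k (wfun s) 0) with hg
  have hT : HasSum g (wfun s z) := by
    have := Complex.hasSum_taylorSeries_on_ball hdiff hzball
    simpa [hg, smul_eq_mul] using this
  have hrn : rn n s z = ∑' k, g (k + n) := by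
    have h2 : HasSum (fun k => g (k + n)) (wfun s z - ∑ k ∈ Finset.range n, g k) :=
      (hasSum_nat_add_iff' n).mpr hT
    rw [h2.tsum_eq, rn]
    congr 1
    refine Finset.sum_congr rfl fun k _ => ?_
    rw [hg]
    ring
  have key : ∀ m : ℕ, ‖g m‖ ≤ M * q ^ m := by
    intro m
    have hfac : (0:ℝ) < (m.factorial : ℝ) := by exact_mod_cast m.factorial_pos
    rw [hg]
    simp only [norm_mul, norm_inv, norm_pow, Complex.norm_natCast]
    calc (m.factorial : ℝ)⁻¹ * (‖z‖ ^ m * ‖iteratedDeriv m (wfun s) 0‖)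
        ≤ (m.factorial : ℝ)⁻¹ * (‖z‖ ^ m * ((m.factorial : ℝ) * (M * (ρ⁻¹)^m))) := by
          apply mul_le_mul_of_nonneg_left _ (by positivity)
          apply mul_le_mul_of_nonneg_left (hcoef m) (by positivity)
      _ = M * q ^ m := by
          rw [hq, div_pow, div_eq_mul_inv, ← inv_pow]
          field_simp
  have hgb : ∀ k : ℕ, ‖g (k + n)‖ ≤ (M * q ^ n) * q ^ k := by
    intro k
    calc ‖g (k + n)‖ ≤ M * q ^ (k + n) := key (k + n)
      _ = (M * q ^ n) * q ^ k := by rw [pow_add]; ring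
  have hgeo : HasSum (fun k : ℕ => (M * q^n) * q^k) ((M * q^n) * (1-q)⁻¹) :=
    (hasSum_geometric_of_lt_one hq0 hq1).mul_left _
  have hbound : ‖rn n s z‖ ≤ (M * q^n) * (1-q)⁻¹ := by
    rw [hrn]
    exact tsum_of_norm_bounded hgeo hgb
  apply hbound.trans
  apply mul_le_mul_of_nonneg_left _ (by positivity)
  apply inv_anti₀ (by linarith) (by linarith)

lemma wfun_zero (s : ℂ) : wfun s 0 = 1 := by
  simp [wfun]

lemma rn_at_zero (n : ℕ) (s : ℂ) (hn : 1 ≤ n) : rn n s 0 = 0 := by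
  rw [rn, Finset.sum_eq_single_of_mem 0 (Finset.mem_range.mpr hn)]
  · simp [iteratedDeriv_zero]
  · intro k _ hk
    simp [zero_pow hk]

lemma rn_zero_at_zero (s : ℂ) : rn 0 s 0 = 1 := by
  simp [rn, wfun_zero]

theorem statement14 (A B : ℝ) (n : ℕ) :
    ∃ C₁ C₂ : ℝ, ∀ s : ℂ, s.re ∈ Set.Icc A B → 0 < s.im →
      ((1 ≤ n → (n:ℝ) ≤ 27/50 * s.im →
          ∀ z : ℂ, ‖z‖ ≤ 20/21 * (2*(n:ℝ)*Real.sqrt s.im/5) ^ ((1:ℝ)/3) →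
            ‖rn n s z‖ ≤ C₁ * ‖z‖^n * s.im ^ (-(n:ℝ)/6)) ∧
        (∀ z : ℂ, ‖z‖ ≤ Real.sqrt s.im / 2 →
            ‖rn n s z‖ ≤ C₂ * Real.exp (14*‖z‖^2/29))) := by
  set K := Real.exp ((|A| + |B| + 2) * Real.log (5/2)) with hK
  have hK1 : 1 ≤ K :=
    Real.one_le_exp (mul_nonneg (by positivity) (Real.log_nonneg (by norm_num)))
  refine ⟨21 * K * Real.exp ((n:ℝ)/3) * ((2*(n:ℝ)/5) ^ ((n:ℝ)/3))⁻¹, 21 * K, ?_⟩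
  intro s hσ ht
  obtain ⟨hA, hB⟩ := hσ
  set rt := Real.sqrt s.im with hrt
  have hrt0 : 0 < rt := Real.sqrt_pos.mpr ht
  have hrtsq : rt^2 = s.im := Real.sq_sqrt ht.le
  constructor
  · -- part (i)
    intro hn1 hnt z hz
    set R := (2*(n:ℝ)*rt/5) ^ ((1:ℝ)/3) with hR
    have hn0 : (0:ℝ) < (n:ℝ) := by exact_mod_cast hn1
    have hx0 : (0:ℝ) < 2*(n:ℝ)*rt/5 := by positivity
    have hR0 : 0 < R := Real.rpow_pos_of_pos hx0 _
    have hR3 : R^3 = 2*(n:ℝ)*rt/5 := by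
      rw [hR, ← Real.rpow_natCast ((2*(n:ℝ)*rt/5) ^ ((1:ℝ)/3)) 3, ← Real.rpow_mul hx0.le]
      norm_num
    have hR35 : R ≤ 3/5 * rt := by
      have h35 : R^3 ≤ (3/5*rt)^3 := by
        rw [hR3, show (3/5*rt)^3 = 27/125 * (rt^2 * rt) by ring, hrtsq]
        nlinarith
      exact (pow_le_pow_iff_left₀ hR0.le (by positivity) (by norm_num)).mp h35
    rcases eq_or_ne z 0 with rfl | hz0
    · simp [rn_at_zero n s hn1, zero_pow (show n ≠ 0 by omega)]
    · have hMb : ∀ ξ : ℂ, ‖ξ‖ = R → ‖wfun s ξ‖ ≤ K * Real.exp ((n:ℝ)/3) := by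
        intro ξ hξ
        have hb := wfun_bound A B hA hB ht (ξ := ξ) (by rw [hξ]; exact hR35)
        have hexp : 5 * ‖ξ‖^3/(6*rt) = (n:ℝ)/3 := by
          rw [hξ, hR3]; field_simp; ring
        rw [← hrt, hexp] at hb
        exact hb
      have htail := rn_tail n ht hR0 (lt_of_le_of_lt hR35 (by nlinarith))
        (by positivity) hMb (by norm_num : (20:ℝ)/21 < 1) hz
      apply htail.trans
      have hRn : R ^ n = (2*(n:ℝ)/5) ^ ((n:ℝ)/3) * s.im ^ ((n:ℝ)/6) := by
        rw [hR, ← Real.rpow_natCast ((2*(n:ℝ)*rt/5) ^ ((1:ℝ)/3)) n, ← Real.rpow_mul hx0.le]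
        rw [show 2*(n:ℝ)*rt/5 = (2*(n:ℝ)/5) * rt by ring,
          Real.mul_rpow (by positivity) hrt0.le]
        congr 1
        · congr 1; ring
        · rw [hrt, Real.sqrt_eq_rpow, ← Real.rpow_mul ht.le]
          congr 1; ring
      have ha : (0:ℝ) < (2*(n:ℝ)/5) ^ ((n:ℝ)/3) := Real.rpow_pos_of_pos (by positivity) _
      have hb2 : (0:ℝ) < s.im ^ ((n:ℝ)/6) := Real.rpow_pos_of_pos ht _
      apply le_of_eq
      rw [show ((1:ℝ) - 20/21)⁻¹ = 21 by norm_num, div_pow, hRn,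
        show -(n:ℝ)/6 = -((n:ℝ)/6) by ring, Real.rpow_neg ht.le]
      field_simp
  · -- part (ii)
    intro z hz
    rcases eq_or_ne z 0 with rfl | hz0
    · have h0 : ‖rn n s 0‖ ≤ 1 := by
        rcases Nat.eq_zero_or_pos n with rfl | hn1
        · rw [rn_zero_at_zero]; norm_num
        · rw [rn_at_zero n s hn1]; norm_num
      apply h0.trans
      have he : Real.exp (14*‖(0:ℂ)‖^2/29) = 1 := by norm_num
      rw [he]
      linarith
    · set ρ := 21/20*‖z‖ with hρdef
      have hz0' : 0 < ‖z‖ := norm_pos_iff.mpr hz0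
      have hρ0 : 0 < ρ := by positivity
      have hρrt : ρ ≤ 3/5*rt := by rw [hρdef]; nlinarith
      have hMb : ∀ ξ : ℂ, ‖ξ‖ = ρ → ‖wfun s ξ‖ ≤ K * Real.exp (14*‖z‖^2/29) := by
        intro ξ hξ
        apply ((wfun_bound A B hA hB ht (ξ := ξ) (by rw [hξ]; exact (hrt ▸ hρrt))).trans)
        rw [← hrt, ← hK]
        apply mul_le_mul_of_nonneg_left _ (by positivity)
        apply Real.exp_le_exp.mpr
        rw [hξ, hρdef]
        rw [div_le_div_iff₀ (by positivity) (by norm_num)]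
        have hx3 : ‖z‖^3 ≤ ‖z‖^2 * (rt/2) := by nlinarith [sq_nonneg ‖z‖]
        nlinarith
      have htail := rn_tail n ht hρ0 (by nlinarith : ρ < rt) (by positivity) hMb
        (by norm_num : (20:ℝ)/21 < 1) (le_of_eq (by rw [hρdef]; ring))
      apply htail.trans
      have hq : ‖z‖/ρ = 20/21 := by
        rw [hρdef, div_eq_iff (by positivity)]; ring
      rw [hq, show ((1:ℝ) - 20/21)⁻¹ = 21 by norm_num]
      have hp1 : ((20:ℝ)/21)^n ≤ 1 := pow_le_one₀ (by norm_num) (by norm_num)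
      have hKE : 0 < K * Real.exp (14*‖z‖^2/29) :=
        mul_pos (lt_of_lt_of_le one_pos hK1) (Real.exp_pos _)
      nlinarith

end
end
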